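/- arXiv:2412.13036 — 5 statements merged into one kernel-verified Lean document; each statement's English description precedes it below -/
import Mathlib

section
/- Let P and Q be probability measures on a measurable space Ω and let ℓ : Ω → ℝ be a measurable function with 0 ≤ ℓ(ω) ≤ C for all ω, where C ≥ 0 is a constant. Then ∫ ℓ dQ ≤ ∫ ℓ dP + √2 · C · (D_JS(Q ‖ P))^{1/2}. (Appendix Lemma 1: the expected error under one distribution is bounded by the expected error under the other plus √2·C times the square root of their Jensen–Shannon divergence.) -/
open MeasureTheory ProbabilityTheory Real
open scoped ENNReal

/-- Kullback–Leibler divergence `KL(P ‖ Q)`: `∫ log (dP/dQ) dP` when `P ≪ Q` (and the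
log-likelihood ratio is integrable), and `+∞` otherwise. -/
noncomputable def klDiv {Ω : Type*} [MeasurableSpace Ω] (P Q : Measure Ω) : ℝ≥0∞ :=
  open Classical in
  if P ≪ Q ∧ Integrable (llr P Q) P then ENNReal.ofReal (∫ ω, llr P Q ω ∂P) else ∞

/-- The midpoint measure `M = (1/2)·P + (1/2)·Q`. -/
noncomputable def midMeasure {Ω : Type*} [MeasurableSpace Ω] (P Q : Measure Ω) : Measure Ω :=
  (2⁻¹ : ℝ≥0∞) • P + (2⁻¹ : ℝ≥0∞) • Q

/-- Jensen–Shannon divergence `D_JS(P ‖ Q) = (1/2)·KL(P ‖ M) + (1/2)·KL(Q ‖ M)` where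
`M` is the midpoint measure. -/
noncomputable def jsDiv {Ω : Type*} [MeasurableSpace Ω] (P Q : Measure Ω) : ℝ≥0∞ :=
  2⁻¹ * klDiv P (midMeasure P Q) + 2⁻¹ * klDiv Q (midMeasure P Q)


/-- derivative helper: monotonicity of `log (1+t) - log (1-t) - 2t` on `[0,1)`. -/
lemma aux_mono_h : MonotoneOn (fun t : ℝ => log (1+t) - log (1-t) - 2*t) (Set.Ico (0:ℝ) 1) := by
  have hD : Convex ℝ (Set.Ico (0:ℝ) 1) := convex_Ico 0 1
  have hder : ∀ x ∈ Set.Ioo (0:ℝ) 1,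
      HasDerivAt (fun t : ℝ => log (1+t) - log (1-t) - 2*t)
        ((1+x)⁻¹ * 1 - (1-x)⁻¹ * (-1) - 2) x := by
    intro x hx
    have hx1 : (1:ℝ) + x ≠ 0 := by nlinarith [hx.1, hx.2]
    have hx2 : (1:ℝ) - x ≠ 0 := by nlinarith [hx.1, hx.2]
    have d1 : HasDerivAt (fun t : ℝ => 1 + t) 1 x := (hasDerivAt_id x).const_add 1
    have d2 : HasDerivAt (fun t : ℝ => 1 - t) (-1) x := (hasDerivAt_id x).const_sub 1
    have l1 := d1.log hx1
    have l2 := d2.log hx2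
    have d3 : HasDerivAt (fun t : ℝ => 2*t) 2 x := by simpa using (hasDerivAt_id x).const_mul 2
    have := (l1.sub l2).sub d3
    exact this.congr_deriv (by ring)
  have hcont : ContinuousOn (fun t : ℝ => log (1+t) - log (1-t) - 2*t) (Set.Ico (0:ℝ) 1) := by
    apply ContinuousOn.sub
    apply ContinuousOn.sub
    · exact (continuousOn_const.add continuousOn_id).log (fun x hx => by
        simp only [Set.mem_Ico] at hx; simp only [Pi.add_apply, Pi.sub_apply, id_eq]; nlinarith [hx.1, hx.2])
    · exact (continuousOn_const.sub continuousOn_id).log (fun x hx => by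
        simp only [Set.mem_Ico] at hx; simp only [Pi.add_apply, Pi.sub_apply, id_eq]; nlinarith [hx.1, hx.2])
    · exact continuousOn_const.mul continuousOn_id
  rw [show Set.Ico (0:ℝ) 1 = Set.Ico (0:ℝ) 1 from rfl]
  apply monotoneOn_of_deriv_nonneg hD hcont
  · rw [interior_Ico]
    intro x hx
    exact ((hder x hx).differentiableAt).differentiableWithinAt
  · rw [interior_Ico]
    intro x hx
    rw [(hder x hx).deriv]
    have h1 : (0:ℝ) < 1 + x := by nlinarith [hx.1, hx.2]
    have h2 : (0:ℝ) < 1 - x := by nlinarith [hx.1, hx.2]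
    have key : (1+x)⁻¹ * 1 - (1-x)⁻¹ * (-1) - 2 = 2*x^2 / ((1+x)*(1-x)) := by
      field_simp
      ring
    rw [key]
    positivity

/-- `(1+t) log (1+t) + (1-t) log (1-t) ≥ t²` on `[0,1]`. -/
lemma aux_psi_nonneg {t : ℝ} (h0 : 0 ≤ t) (h1 : t ≤ 1) :
    t^2 ≤ (1+t) * log (1+t) + (1-t) * log (1-t) := by
  rcases eq_or_lt_of_le h1 with rfl | h1'
  · norm_num
    nlinarith [Real.log_two_gt_d9]
  -- now t ∈ [0,1)
  set ψ : ℝ → ℝ := fun t => (1+t) * log (1+t) + (1-t) * log (1-t) - t^2 with hψ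
  have hder : ∀ x ∈ Set.Ioo (0:ℝ) 1,
      HasDerivAt ψ (log (1+x) - log (1-x) - 2*x) x := by
    intro x hx
    have hx1 : (1:ℝ) + x ≠ 0 := by nlinarith [hx.1, hx.2]
    have hx2 : (1:ℝ) - x ≠ 0 := by nlinarith [hx.1, hx.2]
    have d1 : HasDerivAt (fun t : ℝ => 1 + t) 1 x := (hasDerivAt_id x).const_add 1
    have d2 : HasDerivAt (fun t : ℝ => 1 - t) (-1) x := (hasDerivAt_id x).const_sub 1
    have m1 : HasDerivAt (fun t : ℝ => (1+t) * log (1+t)) ((log (1+x) + 1) * 1) x :=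
      (Real.hasDerivAt_mul_log hx1).comp x d1
    have m2 : HasDerivAt (fun t : ℝ => (1-t) * log (1-t)) ((log (1-x) + 1) * (-1)) x :=
      (Real.hasDerivAt_mul_log hx2).comp x d2
    have d3 : HasDerivAt (fun t : ℝ => t^2) (2*x^1) x := hasDerivAt_pow 2 x
    have := (m1.add m2).sub d3
    exact this.congr_deriv (by ring)
  have hcont : ContinuousOn ψ (Set.Ico (0:ℝ) 1) := by
    apply ContinuousOn.sub
    apply ContinuousOn.add
    · exact (continuousOn_const.add continuousOn_id).mul
        ((continuousOn_const.add continuousOn_id).log (fun x hx => by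
          simp only [Set.mem_Ico] at hx; simp only [Pi.add_apply, Pi.sub_apply, id_eq]; nlinarith [hx.1, hx.2]))
    · exact (continuousOn_const.sub continuousOn_id).mul
        ((continuousOn_const.sub continuousOn_id).log (fun x hx => by
          simp only [Set.mem_Ico] at hx; simp only [Pi.add_apply, Pi.sub_apply, id_eq]; nlinarith [hx.1, hx.2]))
    · exact (continuousOn_pow 2)
  have hmono : MonotoneOn ψ (Set.Ico (0:ℝ) 1) := by
    apply monotoneOn_of_deriv_nonneg (convex_Ico 0 1) hcont
    · rw [interior_Ico]
      intro x hx
      exact ((hder x hx).differentiableAt).differentiableWithinAt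
    · rw [interior_Ico]
      intro x hx
      rw [(hder x hx).deriv]
      have h00 : (fun t : ℝ => log (1+t) - log (1-t) - 2*t) 0 = 0 := by norm_num
      have := aux_mono_h (Set.mem_Ico.2 ⟨le_refl 0, one_pos⟩)
        (Set.mem_Ico.2 ⟨hx.1.le, hx.2⟩) hx.1.le
      rw [h00] at this
      exact this
  have h0' : ψ 0 = 0 := by simp [hψ]
  have := hmono (Set.mem_Ico.2 ⟨le_refl 0, one_pos⟩) (Set.mem_Ico.2 ⟨h0, h1'⟩) h0
  rw [h0'] at this
  simpa [hψ, sub_nonneg] using this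

/-- Key pointwise inequality: `(x-1)² ≤ x log x + (2-x) log (2-x)` for `x ∈ [0,2]`. -/
lemma aux_key_ineq {x : ℝ} (h0 : 0 ≤ x) (h2 : x ≤ 2) :
    (x-1)^2 ≤ x * log x + (2-x) * log (2-x) := by
  rcases le_total 1 x with hx | hx
  · have := aux_psi_nonneg (t := x - 1) (by linarith) (by linarith)
    have e1 : 1 + (x-1) = x := by ring
    have e2 : 1 - (x-1) = 2 - x := by ring
    rw [e1, e2] at this
    linarith [this]
  · have := aux_psi_nonneg (t := 1 - x) (by linarith) (by linarith)
    have e1 : 1 + (1-x) = 2 - x := by ring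
    have e2 : 1 - (1-x) = x := by ring
    rw [e1, e2] at this
    nlinarith [this]

/-- Bound on `|x log x|` for `x ∈ [0,2]`. -/
lemma aux_mul_log_bound {x : ℝ} (h0 : 0 ≤ x) (h2 : x ≤ 2) : |x * log x| ≤ 2 := by
  rcases le_total x 1 with hx | hx
  · have hup : x * log x ≤ 0 := Real.mul_log_nonpos h0 hx
    have hlo : -1 ≤ x * log x := by
      rcases eq_or_lt_of_le h0 with rfl | hx0
      · simp
      · have hinv : log x⁻¹ ≤ x⁻¹ - 1 := Real.log_le_sub_one_of_pos (by positivity)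
        rw [Real.log_inv] at hinv
        have : -(x * log x) ≤ x * (x⁻¹ - 1) := by
          have := mul_le_mul_of_nonneg_left hinv h0
          nlinarith [this]
        have hxx : x * (x⁻¹ - 1) = 1 - x := by field_simp
        nlinarith [this, hxx]
    rw [abs_le]; constructor <;> linarith
  · have hl0 : 0 ≤ log x := Real.log_nonneg hx
    have hl2 : log x ≤ log 2 := Real.log_le_log (by linarith) h2
    have : x * log x ≤ 2 * log 2 := by nlinarith
    rw [abs_le]
    constructor <;> nlinarith [Real.log_two_lt_d9, Real.log_two_gt_d9]

lemma aux_le_toReal_ofReal (a : ℝ) : a ≤ (ENNReal.ofReal a).toReal := by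
  rcases le_or_gt 0 a with h | h
  · rw [ENNReal.toReal_ofReal h]
  · exact h.le.trans ENNReal.toReal_nonneg

lemma aux_integrable_of_bound {Ω : Type*} [MeasurableSpace Ω] {μ : Measure Ω}
    [IsFiniteMeasure μ] {f : Ω → ℝ} (hm : AEStronglyMeasurable f μ) (c : ℝ)
    (h : ∀ᵐ ω ∂μ, |f ω| ≤ c) : Integrable f μ :=
  Integrable.mono' (integrable_const c) hm
    (by filter_upwards [h] with ω hω; rwa [Real.norm_eq_abs])


/-- Appendix Lemma 1: for probability measures `P, Q` and a measurable loss `ℓ` with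
`0 ≤ ℓ ≤ C`, the expected loss under `Q` is bounded by the expected loss under `P`
plus `√2 · C · √(D_JS(Q ‖ P))`. -/
theorem expected_error_le_add_sqrt_jsDiv
    {Ω : Type*} [MeasurableSpace Ω] (P Q : Measure Ω)
    [IsProbabilityMeasure P] [IsProbabilityMeasure Q]
    (ℓ : Ω → ℝ) (hℓ : Measurable ℓ) (C : ℝ) (hC : 0 ≤ C)
    (hℓ0 : ∀ ω, 0 ≤ ℓ ω) (hℓC : ∀ ω, ℓ ω ≤ C) :
    ∫ ω, ℓ ω ∂Q ≤ ∫ ω, ℓ ω ∂P + Real.sqrt 2 * C * Real.sqrt ((jsDiv Q P).toReal)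
    := by
  set M : Measure Ω := midMeasure Q P with hM
  have hM_def : M = (2⁻¹ : ℝ≥0∞) • Q + (2⁻¹ : ℝ≥0∞) • P := rfl
  haveI : IsProbabilityMeasure M := by
    constructor
    rw [hM_def]
    simp [ENNReal.inv_two_add_inv_two]
  -- absolute continuity
  have hQM : Q ≪ M := by
    intro s hs
    rw [hM_def] at hs
    simp only [Measure.coe_add, Pi.add_apply, Measure.coe_smul, Pi.smul_apply,
      smul_eq_mul, add_eq_zero, mul_eq_zero] at hs
    rcases hs.1 with h | h
    · exact absurd h (by norm_num)
    · exact h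
  have hPM : P ≪ M := by
    intro s hs
    rw [hM_def] at hs
    simp only [Measure.coe_add, Pi.add_apply, Measure.coe_smul, Pi.smul_apply,
      smul_eq_mul, add_eq_zero, mul_eq_zero] at hs
    rcases hs.2 with h | h
    · exact absurd h (by norm_num)
    · exact h
  set F : Ω → ℝ := fun ω => (Q.rnDeriv M ω).toReal with hF
  set G : Ω → ℝ := fun ω => (P.rnDeriv M ω).toReal with hG
  have hFmeas : Measurable F := (Measure.measurable_rnDeriv Q M).ennreal_toReal
  have hGmeas : Measurable G := (Measure.measurable_rnDeriv P M).ennreal_toReal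
  -- a.e. structure: G = 2 - F, 0 ≤ F ≤ 2
  haveI : IsFiniteMeasure ((2⁻¹ : ℝ≥0∞) • Q) := by
    constructor
    simp [lt_top_iff_ne_top]
  haveI : IsFiniteMeasure ((2⁻¹ : ℝ≥0∞) • P) := by
    constructor
    simp [lt_top_iff_ne_top]
  have hsum : ∀ᵐ ω ∂M, G ω = 2 - F ω ∧ 0 ≤ F ω ∧ F ω ≤ 2 := by
    have h1 : M.rnDeriv M =ᵐ[M] fun _ => 1 := Measure.rnDeriv_self M
    have h2 : ((2⁻¹ : ℝ≥0∞) • Q + (2⁻¹ : ℝ≥0∞) • P).rnDeriv M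
        =ᵐ[M] ((2⁻¹ : ℝ≥0∞) • Q).rnDeriv M + ((2⁻¹ : ℝ≥0∞) • P).rnDeriv M :=
      Measure.rnDeriv_add' _ _ _
    have h3 : ((2⁻¹ : ℝ≥0∞) • Q).rnDeriv M =ᵐ[M] (2⁻¹ : ℝ≥0∞) • Q.rnDeriv M :=
      Measure.rnDeriv_smul_left_of_ne_top Q M (by norm_num)
    have h4 : ((2⁻¹ : ℝ≥0∞) • P).rnDeriv M =ᵐ[M] (2⁻¹ : ℝ≥0∞) • P.rnDeriv M :=
      Measure.rnDeriv_smul_left_of_ne_top P M (by norm_num)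
    have hQtop := Measure.rnDeriv_lt_top Q M
    have hPtop := Measure.rnDeriv_lt_top P M
    have h1' : ((2⁻¹ : ℝ≥0∞) • Q + (2⁻¹ : ℝ≥0∞) • P).rnDeriv M =ᵐ[M] fun _ => 1 :=
      Measure.rnDeriv_self M
    filter_upwards [h1', h2, h3, h4, hQtop, hPtop] with ω e1 e2 e3 e4 eq ep
    rw [e2] at e1
    simp only [Pi.add_apply] at e1
    rw [e3, e4] at e1
    simp only [Pi.smul_apply, smul_eq_mul] at e1
    -- e1 : 2⁻¹ * Q.rnDeriv M ω + 2⁻¹ * P.rnDeriv M ω = 1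
    have hr : ((2⁻¹ : ℝ≥0∞) * Q.rnDeriv M ω + (2⁻¹ : ℝ≥0∞) * P.rnDeriv M ω).toReal
        = (1 : ℝ≥0∞).toReal := by rw [e1]
    rw [ENNReal.toReal_add (ENNReal.mul_ne_top (by norm_num) eq.ne)
      (ENNReal.mul_ne_top (by norm_num) ep.ne), ENNReal.toReal_mul, ENNReal.toReal_mul] at hr
    simp only [ENNReal.toReal_inv, ENNReal.toReal_ofNat, ENNReal.toReal_one] at hr
    have e5 : F ω = ((Q.rnDeriv M) ω).toReal := rfl
    have e6 : G ω = ((P.rnDeriv M) ω).toReal := rfl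
    rw [← e5, ← e6] at hr
    have hF0 : 0 ≤ F ω := by rw [e5]; exact ENNReal.toReal_nonneg
    have hG0 : 0 ≤ G ω := by rw [e6]; exact ENNReal.toReal_nonneg
    exact ⟨by linarith, hF0, by linarith⟩
  -- integrability helpers
  have hintFlogF : Integrable (fun ω => F ω * Real.log (F ω)) M := by
    apply aux_integrable_of_bound ((hFmeas.mul (Real.measurable_log.comp hFmeas)).aestronglyMeasurable) 2
    filter_upwards [hsum] with ω hω
    exact aux_mul_log_bound hω.2.1 hω.2.2
  have hintGlogG : Integrable (fun ω => G ω * Real.log (G ω)) M := by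
    apply aux_integrable_of_bound ((hGmeas.mul (Real.measurable_log.comp hGmeas)).aestronglyMeasurable) 2
    filter_upwards [hsum] with ω hω
    exact aux_mul_log_bound ENNReal.toReal_nonneg (by rw [hω.1]; linarith [hω.2.1])
  have hintSq : Integrable (fun ω => (F ω - 1)^2) M := by
    apply aux_integrable_of_bound (f := fun ω => (F ω - 1)^2) (((hFmeas.sub measurable_const).pow_const 2).aestronglyMeasurable) 1
    filter_upwards [hsum] with ω hω
    rw [abs_of_nonneg (sq_nonneg _)]
    nlinarith [hω.2.1, hω.2.2]
  have hintAbs : Integrable (fun ω => |F ω - 1|) M := by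
    apply aux_integrable_of_bound (f := fun ω => |F ω - 1|) ((hFmeas.sub measurable_const).abs.aestronglyMeasurable) 1
    filter_upwards [hsum] with ω hω
    rw [abs_abs, abs_le]
    constructor <;> linarith [hω.2.1, hω.2.2]
  have hintF : Integrable F M := Measure.integrable_toReal_rnDeriv
  -- KL divergence values
  have hllrQ : ∀ ω, llr Q M ω = Real.log (F ω) := fun ω => rfl
  have hintllrQ : Integrable (llr Q M) Q := by
    rw [← integrable_rnDeriv_smul_iff hQM]
    simp only [smul_eq_mul]
    exact hintFlogF.congr (by filter_upwards with ω; rw [hllrQ])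
  have hllrP : ∀ ω, llr P M ω = Real.log (G ω) := fun ω => rfl
  have hintllrP : Integrable (llr P M) P := by
    rw [← integrable_rnDeriv_smul_iff hPM]
    simp only [smul_eq_mul]
    exact hintGlogG.congr (by filter_upwards with ω; rw [hllrP])
  set IQ : ℝ := ∫ ω, F ω * Real.log (F ω) ∂M with hIQ
  set IP : ℝ := ∫ ω, G ω * Real.log (G ω) ∂M with hIP
  have hKQ : klDiv Q M = ENNReal.ofReal IQ := by
    rw [klDiv, if_pos ⟨hQM, hintllrQ⟩]
    congr 1
    rw [← integral_rnDeriv_smul hQM (f := llr Q M)]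
    rfl
  have hKP : klDiv P M = ENNReal.ofReal IP := by
    rw [klDiv, if_pos ⟨hPM, hintllrP⟩]
    congr 1
    rw [← integral_rnDeriv_smul hPM (f := llr P M)]
    rfl
  -- jsDiv lower bound
  set J : ℝ := (jsDiv Q P).toReal with hJ
  have hjs : jsDiv Q P = 2⁻¹ * ENNReal.ofReal IQ + 2⁻¹ * ENNReal.ofReal IP := by
    rw [jsDiv, ← hM, hKQ, hKP]
  have hJge : 2⁻¹ * (IQ + IP) ≤ J := by
    rw [hJ, hjs, ENNReal.toReal_add (ENNReal.mul_ne_top (by norm_num) ENNReal.ofReal_ne_top)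
      (ENNReal.mul_ne_top (by norm_num) ENNReal.ofReal_ne_top),
      ENNReal.toReal_mul, ENNReal.toReal_mul]
    simp only [ENNReal.toReal_inv, ENNReal.toReal_ofNat]
    have := aux_le_toReal_ofReal IQ
    have := aux_le_toReal_ofReal IP
    linarith
  set V : ℝ := ∫ ω, (F ω - 1)^2 ∂M with hV
  have hVnn : 0 ≤ V := integral_nonneg fun ω => sq_nonneg _
  have hVle : V ≤ IQ + IP := by
    rw [hV, hIQ, hIP, ← integral_add hintFlogF hintGlogG]
    apply integral_mono_ae hintSq (hintFlogF.add hintGlogG)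
    filter_upwards [hsum] with ω hω
    show (F ω - 1)^2 ≤ F ω * Real.log (F ω) + G ω * Real.log (G ω)
    rw [hω.1]
    exact aux_key_ineq hω.2.1 hω.2.2
  have hV2J : V ≤ 2 * J := by linarith
  -- mean of F is 1
  have hmean : ∫ ω, F ω ∂M = 1 := by
    rw [hF]
    rw [Measure.integral_toReal_rnDeriv hQM]
    simp
  -- Cauchy-Schwarz: A ≤ sqrt V
  set A : ℝ := ∫ ω, |F ω - 1| ∂M with hA
  have hAnn : 0 ≤ A := integral_nonneg fun ω => abs_nonneg _
  have hAsq : A^2 ≤ V := by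
    have hexp : 0 ≤ ∫ ω, (|F ω - 1| - A)^2 ∂M := integral_nonneg fun ω => sq_nonneg _
    have hsq_eq : ∀ ω, (|F ω - 1| - A)^2 = (F ω - 1)^2 - 2*A*|F ω - 1| + A^2 := by
      intro ω
      rw [sub_sq, sq_abs]
      ring
    have i1 : Integrable (fun ω => (F ω - 1)^2 - 2*A*|F ω - 1|) M :=
      hintSq.sub (hintAbs.const_mul (2*A))
    have i2 : Integrable (fun ω => 2*A*|F ω - 1|) M := hintAbs.const_mul (2*A)
    rw [integral_congr_ae (Filter.Eventually.of_forall hsq_eq)] at hexp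
    rw [integral_add i1 (integrable_const _),
      integral_sub hintSq i2, integral_const_mul, integral_const] at hexp
    simp only [probReal_univ, ENNReal.toReal_one, smul_eq_mul, one_mul] at hexp
    rw [← hV, ← hA] at hexp
    nlinarith [hexp]
  have hAle : A ≤ Real.sqrt V := by
    have := Real.sqrt_le_sqrt hAsq
    rwa [Real.sqrt_sq hAnn] at this
  -- the integral difference bound
  have hintl : Integrable ℓ Q := aux_integrable_of_bound hℓ.aestronglyMeasurable C
    (Filter.Eventually.of_forall fun ω => abs_le.2 ⟨by linarith [hℓ0 ω], hℓC ω⟩)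
  have hintlP : Integrable ℓ P := aux_integrable_of_bound hℓ.aestronglyMeasurable C
    (Filter.Eventually.of_forall fun ω => abs_le.2 ⟨by linarith [hℓ0 ω], hℓC ω⟩)
  have hintFl : Integrable (fun ω => F ω * ℓ ω) M := by
    apply aux_integrable_of_bound (f := fun ω => F ω * ℓ ω) ((hFmeas.mul hℓ).aestronglyMeasurable) (2*C)
    filter_upwards [hsum] with ω hω
    rw [abs_mul]
    apply mul_le_mul (by rw [abs_of_nonneg hω.2.1]; exact hω.2.2)
      (abs_le.2 ⟨by linarith [hℓ0 ω], hℓC ω⟩) (abs_nonneg _) (by norm_num)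
  have hintGl : Integrable (fun ω => G ω * ℓ ω) M := by
    apply aux_integrable_of_bound (f := fun ω => G ω * ℓ ω) ((hGmeas.mul hℓ).aestronglyMeasurable) (2*C)
    filter_upwards [hsum] with ω hω
    rw [abs_mul]
    have hG0 : 0 ≤ G ω := ENNReal.toReal_nonneg
    apply mul_le_mul (by rw [abs_of_nonneg hG0]; rw [hω.1]; linarith [hω.2.1])
      (abs_le.2 ⟨by linarith [hℓ0 ω], hℓC ω⟩) (abs_nonneg _) (by norm_num)
  have hintMain : Integrable (fun ω => (2*ℓ ω - C) * (F ω - 1)) M := by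
    apply aux_integrable_of_bound (f := fun ω => (2*ℓ ω - C) * (F ω - 1)) (((hℓ.const_mul 2).sub measurable_const).mul
      (hFmeas.sub measurable_const) |>.aestronglyMeasurable) C
    filter_upwards [hsum] with ω hω
    rw [abs_mul]
    have h1 : |2*ℓ ω - C| ≤ C := abs_le.2 ⟨by linarith [hℓ0 ω], by linarith [hℓC ω]⟩
    have h2 : |F ω - 1| ≤ 1 := abs_le.2 ⟨by linarith [hω.2.1], by linarith [hω.2.2]⟩
    calc |2*ℓ ω - C| * |F ω - 1| ≤ C * 1 :=
          mul_le_mul h1 h2 (abs_nonneg _) hC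
      _ = C := mul_one C
  have heQ : ∫ ω, ℓ ω ∂Q = ∫ ω, F ω * ℓ ω ∂M := by
    rw [← integral_rnDeriv_smul hQM (f := ℓ)]
    simp only [smul_eq_mul]; rfl
  have heP : ∫ ω, ℓ ω ∂P = ∫ ω, G ω * ℓ ω ∂M := by
    rw [← integral_rnDeriv_smul hPM (f := ℓ)]
    simp only [smul_eq_mul]; rfl
  have hdiff : ∫ ω, ℓ ω ∂Q - ∫ ω, ℓ ω ∂P
      = ∫ ω, (2*ℓ ω - C) * (F ω - 1) ∂M + C * (∫ ω, F ω ∂M - 1) := by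
    rw [heQ, heP, ← integral_sub hintFl hintGl]
    have hcong : (fun ω => F ω * ℓ ω - G ω * ℓ ω)
        =ᵐ[M] fun ω => (2*ℓ ω - C) * (F ω - 1) + C * (F ω - 1) := by
      filter_upwards [hsum] with ω hω
      rw [hω.1]
      ring
    have i3 : Integrable (fun ω => F ω - 1) M := hintF.sub (integrable_const 1)
    have i4 : Integrable (fun ω => C * (F ω - 1)) M := i3.const_mul C
    rw [integral_congr_ae hcong, integral_add hintMain i4]
    congr 1
    rw [integral_const_mul, integral_sub hintF (integrable_const 1), integral_const]
    simp
  rw [hmean] at hdiff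
  simp only [sub_self, mul_zero, add_zero] at hdiff
  have hbound : ∫ ω, (2*ℓ ω - C) * (F ω - 1) ∂M ≤ C * A := by
    rw [hA, ← integral_const_mul]
    apply integral_mono_ae hintMain (hintAbs.const_mul C)
    filter_upwards [hsum] with ω hω
    show (2*ℓ ω - C) * (F ω - 1) ≤ C * |F ω - 1|
    calc (2*ℓ ω - C) * (F ω - 1) ≤ |(2*ℓ ω - C) * (F ω - 1)| := le_abs_self _
      _ = |2*ℓ ω - C| * |F ω - 1| := abs_mul _ _
      _ ≤ C * |F ω - 1| := by
          apply mul_le_mul_of_nonneg_right _ (abs_nonneg _)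
          exact abs_le.2 ⟨by linarith [hℓ0 ω], by linarith [hℓC ω]⟩
  -- conclude
  have hsqrt : Real.sqrt V ≤ Real.sqrt 2 * Real.sqrt J := by
    rw [← Real.sqrt_mul (by norm_num : (0:ℝ) ≤ 2)]
    exact Real.sqrt_le_sqrt hV2J
  have : ∫ ω, ℓ ω ∂Q - ∫ ω, ℓ ω ∂P ≤ C * (Real.sqrt 2 * Real.sqrt J) := by
    calc ∫ ω, ℓ ω ∂Q - ∫ ω, ℓ ω ∂P ≤ C * A := by rw [hdiff]; exact hbound
      _ ≤ C * Real.sqrt V := mul_le_mul_of_nonneg_left hAle hC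
      _ ≤ C * (Real.sqrt 2 * Real.sqrt J) := mul_le_mul_of_nonneg_left hsqrt hC
  linarith [this]
end

section
/- Let P and Q be probability measures on a measurable space Ω with Q ≪ P, and let ℓ : Ω → ℝ be a measurable function with 0 ≤ ℓ(ω) ≤ C for all ω, where C ≥ 0 is a constant. Then ∫ ℓ dQ ≤ ∫ ℓ dP + (C/√2) · (KL(Q ‖ P))^{1/2}. -/
open MeasureTheory ProbabilityTheory Real
open scoped ENNReal

/-- ψ is monotone on (0,∞). -/
lemma psi_mono : MonotoneOn (fun x : ℝ => (x + 1) * Real.log x - 2 * (x - 1)) (Set.Ioi 0) := by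
  have hderiv : ∀ x : ℝ, 0 < x →
      HasDerivAt (fun x : ℝ => (x + 1) * Real.log x - 2 * (x - 1))
        (Real.log x + (x + 1) / x - 2) x := by
    intro x hx
    have h1 : HasDerivAt (fun x : ℝ => (x + 1) * Real.log x)
        (1 * Real.log x + (x + 1) * x⁻¹) x :=
      ((hasDerivAt_id x).add_const 1).mul (Real.hasDerivAt_log hx.ne')
    have h2 : HasDerivAt (fun x : ℝ => 2 * (x - 1)) 2 x := by
      simpa using ((hasDerivAt_id x).sub_const 1).const_mul 2
    refine (h1.sub h2).congr_deriv ?_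
    ring
  refine monotoneOn_of_deriv_nonneg (convex_Ioi 0) ?_ ?_ ?_
  · intro x hx
    exact ((hderiv x hx).continuousAt).continuousWithinAt
  · intro x hx
    rw [interior_Ioi] at hx
    exact (hderiv x hx).differentiableAt.differentiableWithinAt
  · intro x hx
    rw [interior_Ioi] at hx
    rw [(hderiv x hx).deriv]
    have hlog : 1 - x⁻¹ ≤ Real.log x := by
      have := Real.log_le_sub_one_of_pos (inv_pos.mpr hx)
      rw [Real.log_inv] at this
      linarith
    have hx' : (x + 1) / x = 1 + x⁻¹ := by rw [add_div, div_self hx.ne']; ring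
    rw [hx']
    linarith

/-- Key pointwise inequality for Pinsker. -/
lemma pinsker_pointwise {x : ℝ} (hx : 0 ≤ x) :
    3 * (x - 1) ^ 2 ≤ (2 * x + 4) * (x * Real.log x - x + 1) := by
  set h : ℝ → ℝ := fun y => (2 * y + 4) * (y * Real.log y - y + 1) - 3 * (y - 1) ^ 2 with hh
  suffices hs : 0 ≤ h x by simpa [hh] using hs
  have hcont : Continuous h := by
    have : h = fun y => (2 * y + 4) * (y * Real.log y) + ((2 * y + 4) * (1 - y) - 3 * (y - 1) ^ 2) := by
      funext y; simp only [hh]; ring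
    rw [this]
    exact (((continuous_const.mul continuous_id).add continuous_const).mul
      Real.continuous_mul_log).add (by fun_prop)
  have hderiv : ∀ y : ℝ, 0 < y → HasDerivAt h
      (4 * ((y + 1) * Real.log y - 2 * (y - 1))) y := by
    intro y hy
    have h1 : HasDerivAt (fun y : ℝ => 2 * y + 4) 2 y := by
      simpa using (hasDerivAt_id y).const_mul 2 |>.add_const 4
    have h2 : HasDerivAt (fun y : ℝ => y * Real.log y - y + 1) (Real.log y + 1 - 1) y :=
      ((Real.hasDerivAt_mul_log hy.ne').sub (hasDerivAt_id y)).add_const 1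
    have h3 : HasDerivAt (fun y : ℝ => 3 * (y - 1) ^ 2) (3 * (2 * (y - 1))) y := by
      simpa using (((hasDerivAt_id y).sub_const 1).pow 2).const_mul 3
    have := (h1.mul h2).sub h3
    refine this.congr_deriv ?_
    ring
  rcases eq_or_lt_of_le hx with h0 | hx
  · simp [hh, ← h0]
    norm_num
  rcases le_or_gt 1 x with h1 | h1
  · -- monotone on [1, x]
    have hmono : MonotoneOn h (Set.Icc 1 x) := by
      refine monotoneOn_of_deriv_nonneg (convex_Icc 1 x) hcont.continuousOn ?_ ?_
      · intro y hy
        rw [interior_Icc] at hy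
        exact (hderiv y (by linarith [hy.1])).differentiableAt.differentiableWithinAt
      · intro y hy
        rw [interior_Icc] at hy
        have hy1 : (1:ℝ) < y := hy.1
        rw [(hderiv y (by linarith)).deriv]
        have := psi_mono (Set.mem_Ioi.mpr one_pos) (Set.mem_Ioi.mpr (by linarith : (0:ℝ) < y)) hy1.le
        simp at this
        nlinarith [this]
    have h1eq : h 1 = 0 := by simp [hh]
    have := hmono (Set.left_mem_Icc.mpr h1) (Set.right_mem_Icc.mpr h1) h1
    rw [h1eq] at this
    exact this
  · -- antitone on [x, 1]
    have hmono : AntitoneOn h (Set.Icc x 1) := by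
      refine antitoneOn_of_deriv_nonpos (convex_Icc x 1) hcont.continuousOn ?_ ?_
      · intro y hy
        rw [interior_Icc] at hy
        exact (hderiv y (lt_trans hx hy.1)).differentiableAt.differentiableWithinAt
      · intro y hy
        rw [interior_Icc] at hy
        rw [(hderiv y (lt_trans hx hy.1)).deriv]
        have := psi_mono (Set.mem_Ioi.mpr (lt_trans hx hy.1)) (Set.mem_Ioi.mpr one_pos) hy.2.le
        simp at this
        nlinarith [this]
    have h1eq : h 1 = 0 := by simp [hh]
    have := hmono (Set.left_mem_Icc.mpr h1.le) (Set.right_mem_Icc.mpr h1.le) h1.le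
    rw [h1eq] at this
    exact this

/-- For probability measures `Q ≪ P` and a measurable loss `ℓ` with `0 ≤ ℓ ≤ C`,
`∫ ℓ dQ ≤ ∫ ℓ dP + (C/√2) · (KL(Q ‖ P))^{1/2}` (as extended nonnegative reals, so that
the bound is trivial when the divergence is infinite). -/
theorem expected_error_le_add_sqrt_klDiv
    {Ω : Type*} [MeasurableSpace Ω] (P Q : Measure Ω)
    [IsProbabilityMeasure P] [IsProbabilityMeasure Q]
    (ℓ : Ω → ℝ) (hℓ : Measurable ℓ) (C : ℝ) (hC : 0 ≤ C)
    (hℓ0 : ∀ ω, 0 ≤ ℓ ω) (hℓC : ∀ ω, ℓ ω ≤ C)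
    (hQP : Q ≪ P) :
    ENNReal.ofReal (∫ ω, ℓ ω ∂Q) ≤
      ENNReal.ofReal (∫ ω, ℓ ω ∂P)
        + ENNReal.ofReal (C / Real.sqrt 2) * (klDiv Q P) ^ (1/2 : ℝ) := by
  -- trivial when C = 0
  rcases eq_or_lt_of_le hC with rfl | hCpos
  · have hz : ∀ ω, ℓ ω = 0 := fun ω => le_antisymm (hℓC ω) (hℓ0 ω)
    simp [hz]
  by_cases hint : Integrable (llr Q P) Q
  swap
  · -- KL = ∞
    have hkl : klDiv Q P = ∞ := by
      rw [klDiv, if_neg (by tauto)]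
    rw [hkl, ENNReal.top_rpow_of_pos (by norm_num), ENNReal.mul_top
      (by simp [ENNReal.ofReal_eq_zero, not_le, div_pos hCpos (Real.sqrt_pos.mpr two_pos)])]
    simp
  -- main case
  set f : Ω → ℝ := fun ω => (Q.rnDeriv P ω).toReal with hf
  have hf_meas : Measurable f := (Measure.measurable_rnDeriv Q P).ennreal_toReal
  have hf0 : ∀ ω, 0 ≤ f ω := fun ω => ENNReal.toReal_nonneg
  have hf_int : Integrable f P := Measure.integrable_toReal_rnDeriv
  have hfP : ∫ ω, f ω ∂P = 1 := by
    rw [hf, Measure.integral_toReal_rnDeriv hQP]; simp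
  have hℓ_intQ : Integrable ℓ Q :=
    Integrable.mono' (integrable_const C) hℓ.aestronglyMeasurable
      (Filter.Eventually.of_forall fun ω => by rw [Real.norm_of_nonneg (hℓ0 ω)]; exact hℓC ω)
  have hℓ_intP : Integrable ℓ P :=
    Integrable.mono' (integrable_const C) hℓ.aestronglyMeasurable
      (Filter.Eventually.of_forall fun ω => by rw [Real.norm_of_nonneg (hℓ0 ω)]; exact hℓC ω)
  have hfl_int : Integrable (fun ω => f ω * ℓ ω) P := by
    have := (integrable_rnDeriv_smul_iff hQP (f := ℓ)).mpr hℓ_intQ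
    simpa [smul_eq_mul] using this
  have hfl_eq : ∫ ω, f ω * ℓ ω ∂P = ∫ ω, ℓ ω ∂Q := by
    have := integral_rnDeriv_smul hQP (f := ℓ)
    simpa [smul_eq_mul] using this
  have hllr : ∀ ω, llr Q P ω = Real.log (f ω) := fun ω => rfl
  have hflog_int : Integrable (fun ω => f ω * Real.log (f ω)) P := by
    have := (integrable_rnDeriv_smul_iff hQP (f := llr Q P)).mpr hint
    simpa [smul_eq_mul, llr] using this
  set K : ℝ := ∫ ω, llr Q P ω ∂Q with hK
  have hflog_eq : ∫ ω, f ω * Real.log (f ω) ∂P = K := by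
    have := integral_rnDeriv_smul hQP (f := llr Q P)
    simpa [smul_eq_mul, llr, hK] using this
  -- φ ∘ f
  set φ : Ω → ℝ := fun ω => f ω * Real.log (f ω) - f ω + 1 with hφ
  have hsub_int : Integrable (fun ω => f ω * Real.log (f ω) - f ω) P := hflog_int.sub hf_int
  have hφ_int : Integrable φ P := hsub_int.add (integrable_const 1)
  have hφ_eq : ∫ ω, φ ω ∂P = K := by
    rw [hφ]
    rw [integral_add hsub_int (integrable_const 1),
      integral_sub hflog_int hf_int, hflog_eq, hfP, integral_const]
    simp
  have hφ0 : ∀ ω, 0 ≤ φ ω := by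
    intro ω
    have h := pinsker_pointwise (hf0 ω)
    show 0 ≤ f ω * Real.log (f ω) - f ω + 1
    nlinarith [sq_nonneg (f ω - 1), hf0 ω]
  have hK0 : 0 ≤ K := hφ_eq ▸ integral_nonneg hφ0
  -- Pinsker via Cauchy-Schwarz
  set u : Ω → ℝ := fun ω => Real.sqrt ((2 * f ω + 4) / 3) with hu
  set v : Ω → ℝ := fun ω => |f ω - 1| * Real.sqrt (3 / (2 * f ω + 4)) with hv
  have hden : ∀ ω, (0:ℝ) < 2 * f ω + 4 := fun ω => by nlinarith [hf0 ω]
  have huv : ∀ ω, u ω * v ω = |f ω - 1| := by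
    intro ω
    show Real.sqrt ((2 * f ω + 4) / 3) * (|f ω - 1| * Real.sqrt (3 / (2 * f ω + 4))) = |f ω - 1|
    rw [mul_comm (|f ω - 1|), ← mul_assoc, ← Real.sqrt_mul (by positivity)]
    have : (2 * f ω + 4) / 3 * (3 / (2 * f ω + 4)) = 1 := by
      field_simp
      exact div_self (hden ω).ne'
    rw [this, Real.sqrt_one, one_mul]
  have hu_sq : ∀ ω, u ω ^ 2 = (2 * f ω + 4) / 3 := fun ω =>
    Real.sq_sqrt (by positivity)
  have hv_sq : ∀ ω, v ω ^ 2 = (f ω - 1) ^ 2 * (3 / (2 * f ω + 4)) := by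
    intro ω
    rw [hv, mul_pow, Real.sq_sqrt (by positivity), sq_abs]
  have hu_sq_int : Integrable (fun ω => u ω ^ 2) P := by
    simp only [hu_sq]
    exact ((hf_int.const_mul 2).add (integrable_const 4)).div_const 3
  have hv_sq_le : ∀ ω, v ω ^ 2 ≤ φ ω := by
    intro ω
    rw [hv_sq]
    show (f ω - 1) ^ 2 * (3 / (2 * f ω + 4)) ≤ f ω * Real.log (f ω) - f ω + 1
    rw [mul_comm, div_mul_eq_mul_div, div_le_iff₀ (hden ω)]
    nlinarith [pinsker_pointwise (hf0 ω)]
  have hv_sq_int : Integrable (fun ω => v ω ^ 2) P := by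
    refine Integrable.mono' hφ_int ?_ (Filter.Eventually.of_forall fun ω => ?_)
    · exact ((hf_meas.sub measurable_const).abs.mul
        ((measurable_const.div ((hf_meas.const_mul 2).add_const 4)).sqrt)).pow_const 2
        |>.aestronglyMeasurable
    · rw [Real.norm_of_nonneg (sq_nonneg _)]
      exact hv_sq_le ω
  have hu_meas : Measurable u := ((hf_meas.const_mul 2).add_const 4).div_const 3 |>.sqrt
  have hv_meas : Measurable v := (hf_meas.sub measurable_const).abs.mul
        ((measurable_const.div ((hf_meas.const_mul 2).add_const 4)).sqrt)
  have hCS : ∫ ω, u ω * v ω ∂P ≤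
      (∫ ω, u ω ^ (2:ℝ) ∂P) ^ ((1:ℝ)/2) * (∫ ω, v ω ^ (2:ℝ) ∂P) ^ ((1:ℝ)/2) := by
    refine integral_mul_le_Lp_mul_Lq_of_nonneg Real.HolderConjugate.two_two
      (Filter.Eventually.of_forall fun ω => Real.sqrt_nonneg _)
      (Filter.Eventually.of_forall fun ω => by positivity) ?_ ?_
    · rw [show ENNReal.ofReal (2:ℝ) = 2 by norm_num]
      exact (memLp_two_iff_integrable_sq hu_meas.aestronglyMeasurable).mpr hu_sq_int
    · rw [show ENNReal.ofReal (2:ℝ) = 2 by norm_num]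
      exact (memLp_two_iff_integrable_sq hv_meas.aestronglyMeasurable).mpr hv_sq_int
  have hrpow2 : ∀ g : Ω → ℝ, (fun ω => (g ω) ^ (2:ℝ)) = fun ω => g ω ^ 2 := by
    intro g; funext ω
    rw [show (2:ℝ) = ((2:ℕ):ℝ) by norm_num, Real.rpow_natCast]
  have hT : ∫ ω, |f ω - 1| ∂P ≤ Real.sqrt 2 * Real.sqrt K := by
    have h1 : ∫ ω, u ω ^ (2:ℝ) ∂P = 2 := by
      rw [hrpow2]
      simp only [hu_sq]
      rw [integral_div, integral_add (hf_int.const_mul 2) (integrable_const 4),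
        integral_const_mul, hfP, integral_const]
      simp
      norm_num
    have h2 : ∫ ω, v ω ^ (2:ℝ) ∂P ≤ K := by
      rw [hrpow2, ← hφ_eq]
      exact integral_mono hv_sq_int hφ_int hv_sq_le
    have h2' : (0:ℝ) ≤ ∫ ω, v ω ^ (2:ℝ) ∂P := by
      rw [hrpow2]; exact integral_nonneg fun ω => sq_nonneg _
    calc ∫ ω, |f ω - 1| ∂P = ∫ ω, u ω * v ω ∂P := by
            exact integral_congr_ae (Filter.Eventually.of_forall fun ω => (huv ω).symm)
      _ ≤ (∫ ω, u ω ^ (2:ℝ) ∂P) ^ ((1:ℝ)/2) * (∫ ω, v ω ^ (2:ℝ) ∂P) ^ ((1:ℝ)/2) := hCS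
      _ ≤ Real.sqrt 2 * Real.sqrt K := by
            rw [h1, ← Real.sqrt_eq_rpow, ← Real.sqrt_eq_rpow]
            exact mul_le_mul_of_nonneg_left (Real.sqrt_le_sqrt h2) (Real.sqrt_nonneg 2)
  -- TV bound
  have habs_int : Integrable (fun ω => |f ω - 1|) P := (hf_int.sub (integrable_const 1)).abs
  have hTV : ∫ ω, ℓ ω ∂Q - ∫ ω, ℓ ω ∂P ≤ (C/2) * ∫ ω, |f ω - 1| ∂P := by
    have hpt : ∀ ω, ℓ ω * (f ω - 1) ≤ (C/2) * (f ω - 1) + (C/2) * |f ω - 1| := by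
      intro ω
      rcases le_or_gt 1 (f ω) with h | h
      · rw [abs_of_nonneg (by linarith)]
        nlinarith [hℓC ω, hℓ0 ω]
      · rw [abs_of_neg (by linarith)]
        nlinarith [hℓC ω, hℓ0 ω]
    have hL_int : Integrable (fun ω => ℓ ω * (f ω - 1)) P := by
      have : (fun ω => ℓ ω * (f ω - 1)) = fun ω => f ω * ℓ ω - ℓ ω := by
        funext ω; ring
      rw [this]; exact hfl_int.sub hℓ_intP
    have hsub1 : Integrable (fun ω => f ω - 1) P := hf_int.sub (integrable_const 1)
    have hR_int : Integrable (fun ω => (C/2) * (f ω - 1) + (C/2) * |f ω - 1|) P :=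
      (hsub1.const_mul _).add (habs_int.const_mul _)
    have := integral_mono hL_int hR_int hpt
    rw [integral_add (hsub1.const_mul _) (habs_int.const_mul _),
      integral_const_mul, integral_const_mul,
      integral_sub hf_int (integrable_const 1), hfP, integral_const] at this
    simp at this
    have hLeq : ∫ ω, ℓ ω * (f ω - 1) ∂P = ∫ ω, ℓ ω ∂Q - ∫ ω, ℓ ω ∂P := by
      have he : (fun ω => ℓ ω * (f ω - 1)) = fun ω => f ω * ℓ ω - ℓ ω := by
        funext ω; ring
      rw [he, integral_sub hfl_int hℓ_intP, hfl_eq]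
    rw [hLeq] at this
    exact this
  -- combine
  have hmain : ∫ ω, ℓ ω ∂Q ≤ ∫ ω, ℓ ω ∂P + (C / Real.sqrt 2) * Real.sqrt K := by
    have h2 : (C/2) * (Real.sqrt 2 * Real.sqrt K) = (C / Real.sqrt 2) * Real.sqrt K := by
      have hs : Real.sqrt 2 * Real.sqrt 2 = 2 := Real.mul_self_sqrt (by norm_num)
      have hs0 : Real.sqrt 2 ≠ 0 := by positivity
      field_simp
      linear_combination Real.sqrt K * hs
    linarith [hTV, mul_le_mul_of_nonneg_left hT (by positivity : (0:ℝ) ≤ C/2)]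
  have hkl : klDiv Q P = ENNReal.ofReal K := by rw [klDiv, if_pos ⟨hQP, hint⟩]
  rw [hkl, ENNReal.ofReal_rpow_of_nonneg hK0 (by norm_num), ← ENNReal.ofReal_mul (by positivity),
    ← Real.sqrt_eq_rpow, ← ENNReal.ofReal_add (integral_nonneg fun ω => hℓ0 ω) (by positivity)]
  exact ENNReal.ofReal_le_ofReal hmain
end

section
/- Let 𝒳 and 𝒴 be standard Borel spaces, let P and Q be probability measures on 𝒳 × 𝒴 with 𝒴-marginals P_Y and Q_Y, and let κ_P and κ_Q be Markov kernels from 𝒴 to 𝒳 that disintegrate P and Q, i.e., P = P_Y ⊗ κ_P and Q = Q_Y ⊗ κ_Q (identifying 𝒳 × 𝒴 with 𝒴 × 𝒳 by the coordinate swap), so that κ_P(y) and κ_Q(y) are regular conditional distributions of X given Y = y under P and Q. Then D_JS(P ‖ Q) ≤ D_JS(P_Y ‖ Q_Y) + ∫ D_JS(κ_P(y) ‖ κ_Q(y)) dP_Y(y) + ∫ D_JS(κ_P(y) ‖ κ_Q(y)) dQ_Y(y). (Appendix Lemma 2: decomposition of the joint Jensen–Shannon divergence into a marginal term and two expected conditional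 terms.) -/
open MeasureTheory ProbabilityTheory Real
open scoped ENNReal

section Aux

variable {α : Type*} {mα : MeasurableSpace α} {μ ν : Measure α}

lemma aux_ac (h : μ ≤ (2 : ℝ≥0∞) • ν) : μ ≪ ν :=
  (Measure.absolutelyContinuous_of_le h).trans Measure.smul_absolutelyContinuous

lemma aux_rnDeriv_le_two [IsFiniteMeasure μ] [IsFiniteMeasure ν] (h : μ ≤ (2 : ℝ≥0∞) • ν) :
    μ.rnDeriv ν ≤ᵐ[ν] fun _ => 2 := by
  refine ae_le_of_forall_setLIntegral_le_of_sigmaFinite (Measure.measurable_rnDeriv _ _)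
    fun s hs _ => ?_
  calc ∫⁻ x in s, μ.rnDeriv ν x ∂ν ≤ μ s := Measure.setLIntegral_rnDeriv_le s
  _ ≤ ((2 : ℝ≥0∞) • ν) s := Measure.le_iff'.1 h s
  _ = ∫⁻ _ in s, 2 ∂ν := by
      simp [Measure.smul_apply, smul_eq_mul, mul_comm]

lemma aux_abs_log_le {t : ℝ} (ht : 0 < t) (ht2 : t ≤ 2) : |log t| ≤ log 2 + t⁻¹ := by
  rcases le_total 1 t with h1 | h1
  · rw [abs_of_nonneg (log_nonneg h1)]
    have := log_le_log ht ht2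
    have : (0:ℝ) ≤ t⁻¹ := by positivity
    linarith [log_le_log ht ht2]
  · rw [abs_of_nonpos (log_nonpos ht.le h1)]
    have h2 : -log t = log t⁻¹ := (log_inv t).symm
    have h3 : log t⁻¹ ≤ t⁻¹ - 1 := log_le_sub_one_of_pos (by positivity)
    have h4 : (0:ℝ) ≤ log 2 := log_nonneg one_le_two
    linarith

lemma aux_lintegral_inv_rnDeriv_le [IsFiniteMeasure μ] [IsFiniteMeasure ν] (hac : μ ≪ ν) :
    ∫⁻ x, (μ.rnDeriv ν x)⁻¹ ∂μ ≤ ν Set.univ := by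
  have hwd : ∫⁻ x, (μ.rnDeriv ν x)⁻¹ ∂(ν.withDensity (μ.rnDeriv ν)) ≤ ν Set.univ := by
    rw [lintegral_withDensity_eq_lintegral_mul _ (Measure.measurable_rnDeriv _ _)
      (show Measurable fun x => (μ.rnDeriv ν x)⁻¹ from (Measure.measurable_rnDeriv _ _).inv)]
    calc ∫⁻ x, (μ.rnDeriv ν * fun x => (μ.rnDeriv ν x)⁻¹) x ∂ν ≤ ∫⁻ _, 1 ∂ν :=
          lintegral_mono fun x => ENNReal.mul_inv_le_one _
    _ = ν Set.univ := by simp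
  rwa [Measure.withDensity_rnDeriv_eq μ ν hac] at hwd

lemma lintegral_nnorm_llr_le [IsFiniteMeasure μ] [IsFiniteMeasure ν]
    (h : μ ≤ (2 : ℝ≥0∞) • ν) :
    ∫⁻ x, ‖llr μ ν x‖₊ ∂μ ≤ ENNReal.ofReal (log 2) * μ Set.univ + ν Set.univ := by
  have hac := aux_ac h
  have hbound : ∀ᵐ x ∂μ, (‖llr μ ν x‖₊ : ℝ≥0∞) ≤ ENNReal.ofReal (log 2) + (μ.rnDeriv ν x)⁻¹ := by
    filter_upwards [Measure.rnDeriv_pos hac, hac.ae_le (μ.rnDeriv_ne_top ν),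
      hac.ae_le (aux_rnDeriv_le_two h)] with x hpos hne hle2
    set t : ℝ := (μ.rnDeriv ν x).toReal with htdef
    have htpos : 0 < t := ENNReal.toReal_pos hpos.ne' hne
    have ht2 : t ≤ 2 := by
      rw [htdef, show (2:ℝ) = (2:ℝ≥0∞).toReal by simp]
      exact ENNReal.toReal_mono ENNReal.ofNat_ne_top hle2
    have h1 : (‖llr μ ν x‖₊ : ℝ≥0∞) = ENNReal.ofReal |log t| := by
      rw [← enorm_eq_nnnorm, ← ofReal_norm, Real.norm_eq_abs, llr]
    have h2 : (μ.rnDeriv ν x)⁻¹ = ENNReal.ofReal t⁻¹ := by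
      rw [ENNReal.ofReal_inv_of_pos htpos, htdef, ENNReal.ofReal_toReal hne]
    rw [h1, h2, ← ENNReal.ofReal_add (log_nonneg one_le_two) (by positivity)]
    exact ENNReal.ofReal_le_ofReal (aux_abs_log_le htpos ht2)
  calc ∫⁻ x, ‖llr μ ν x‖₊ ∂μ
      ≤ ∫⁻ x, (ENNReal.ofReal (log 2) + (μ.rnDeriv ν x)⁻¹) ∂μ := lintegral_mono_ae hbound
  _ = ENNReal.ofReal (log 2) * μ Set.univ + ∫⁻ x, (μ.rnDeriv ν x)⁻¹ ∂μ := by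
      rw [lintegral_add_left measurable_const, lintegral_const]
  _ ≤ ENNReal.ofReal (log 2) * μ Set.univ + ν Set.univ :=
      add_le_add_right (aux_lintegral_inv_rnDeriv_le hac) _

lemma integrable_llr_of_le [IsFiniteMeasure μ] [IsFiniteMeasure ν]
    (h : μ ≤ (2 : ℝ≥0∞) • ν) : Integrable (llr μ ν) μ := by
  refine ⟨(measurable_llr _ _).aestronglyMeasurable, ?_⟩
  refine lt_of_le_of_lt (lintegral_nnorm_llr_le h) ?_
  exact ENNReal.add_lt_top.2 ⟨ENNReal.mul_lt_top ENNReal.ofReal_lt_top (measure_lt_top _ _),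
    measure_lt_top _ _⟩

lemma integral_norm_llr_le [IsProbabilityMeasure μ] [IsProbabilityMeasure ν]
    (h : μ ≤ (2 : ℝ≥0∞) • ν) :
    ∫ x, ‖llr μ ν x‖ ∂μ ≤ log 2 + 1 := by
  rw [integral_norm_eq_lintegral_enorm (measurable_llr _ _).aestronglyMeasurable]
  have hb := lintegral_nnorm_llr_le h
  simp only [measure_univ, mul_one] at hb
  calc (∫⁻ x, ‖llr μ ν x‖₊ ∂μ).toReal ≤ (ENNReal.ofReal (log 2) + 1).toReal :=
        ENNReal.toReal_mono (by simp) hb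
  _ = log 2 + 1 := by
      rw [ENNReal.toReal_add ENNReal.ofReal_ne_top ENNReal.one_ne_top,
        ENNReal.toReal_ofReal (log_nonneg one_le_two), ENNReal.toReal_one]

lemma integral_llr_nonneg [IsProbabilityMeasure μ] [IsProbabilityMeasure ν]
    (hac : μ ≪ ν) (hint : Integrable (llr μ ν) μ) : 0 ≤ ∫ x, llr μ ν x ∂μ := by
  set t : α → ℝ := fun x => (μ.rnDeriv ν x).toReal with ht
  have ht_meas : Measurable fun x => (t x)⁻¹ :=
    (Measure.measurable_rnDeriv μ ν).ennreal_toReal.inv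
  have h_ofReal : ∀ᵐ x ∂μ, ENNReal.ofReal (t x)⁻¹ = (μ.rnDeriv ν x)⁻¹ := by
    filter_upwards [Measure.rnDeriv_pos hac, hac.ae_le (μ.rnDeriv_ne_top ν)] with x hpos hne
    rw [ENNReal.ofReal_inv_of_pos (ENNReal.toReal_pos hpos.ne' hne)]
    rw [ENNReal.ofReal_toReal hne]
  have h_lint : ∫⁻ x, ENNReal.ofReal (t x)⁻¹ ∂μ ≤ 1 := by
    rw [lintegral_congr_ae h_ofReal]
    simpa using aux_lintegral_inv_rnDeriv_le hac
  have hint_inv : Integrable (fun x => (t x)⁻¹) μ := by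
    refine ⟨ht_meas.aestronglyMeasurable, ?_⟩
    refine lt_of_le_of_lt (le_of_eq (lintegral_congr fun x => ?_)) (h_lint.trans_lt ENNReal.one_lt_top)
    rw [← ofReal_norm, Real.norm_eq_abs, abs_of_nonneg (by positivity)]
  have key : ∀ᵐ x ∂μ, -llr μ ν x ≤ (t x)⁻¹ - 1 := by
    filter_upwards [Measure.rnDeriv_pos hac, hac.ae_le (μ.rnDeriv_ne_top ν)] with x hpos hne
    have htpos : 0 < t x := ENNReal.toReal_pos hpos.ne' hne
    have : -log (t x) = log (t x)⁻¹ := (log_inv _).symm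
    have h3 := log_le_sub_one_of_pos (inv_pos.2 htpos)
    rw [llr]
    linarith
  have h1 : ∫ x, -llr μ ν x ∂μ ≤ ∫ x, ((t x)⁻¹ - 1) ∂μ :=
    integral_mono_ae hint.neg (hint_inv.sub (integrable_const 1)) key
  have h2 : ∫ x, ((t x)⁻¹ - 1) ∂μ = (∫ x, (t x)⁻¹ ∂μ) - 1 := by
    rw [integral_sub hint_inv (integrable_const 1), integral_const]
    simp
  have h3 : ∫ x, (t x)⁻¹ ∂μ ≤ 1 := by
    rw [integral_eq_lintegral_of_nonneg_ae (ae_of_all _ fun x => by positivity)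
      ht_meas.aestronglyMeasurable]
    calc (∫⁻ x, ENNReal.ofReal (t x)⁻¹ ∂μ).toReal ≤ (1 : ℝ≥0∞).toReal :=
          ENNReal.toReal_mono ENNReal.one_ne_top h_lint
    _ = 1 := by simp
  rw [integral_neg] at h1
  linarith

lemma two_smul_midMeasure (μ ν : Measure α) : (2 : ℝ≥0∞) • midMeasure μ ν = μ + ν := by
  simp only [midMeasure, smul_add, smul_smul,
    ENNReal.mul_inv_cancel two_ne_zero ENNReal.ofNat_ne_top, one_smul]

lemma le_two_smul_midMeasure_left (μ ν : Measure α) : μ ≤ (2 : ℝ≥0∞) • midMeasure μ ν := by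
  rw [two_smul_midMeasure]; exact Measure.le_add_right le_rfl

lemma le_two_smul_midMeasure_right (μ ν : Measure α) : ν ≤ (2 : ℝ≥0∞) • midMeasure μ ν := by
  rw [two_smul_midMeasure]; exact Measure.le_add_left le_rfl

instance isProbabilityMeasure_midMeasure [IsProbabilityMeasure μ] [IsProbabilityMeasure ν] :
    IsProbabilityMeasure (midMeasure μ ν) := by
  constructor
  simp [midMeasure, Measure.add_apply, Measure.smul_apply, smul_eq_mul,
    ENNReal.inv_two_add_inv_two]

instance isFiniteMeasure_midMeasure [IsFiniteMeasure μ] [IsFiniteMeasure ν] :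
    IsFiniteMeasure (midMeasure μ ν) := by
  constructor
  simp only [midMeasure, Measure.add_apply, Measure.smul_apply, smul_eq_mul]
  exact ENNReal.add_lt_top.2 ⟨ENNReal.mul_lt_top (by simp) (measure_lt_top _ _),
    ENNReal.mul_lt_top (by simp) (measure_lt_top _ _)⟩

lemma klDiv_of_ac (h1 : μ ≪ ν) (h2 : Integrable (llr μ ν) μ) :
    klDiv μ ν = ENNReal.ofReal (∫ x, llr μ ν x ∂μ) := by
  simp only [klDiv]
  rw [if_pos ⟨h1, h2⟩]

lemma klDiv_of_not (h : ¬ (μ ≪ ν ∧ Integrable (llr μ ν) μ)) : klDiv μ ν = ∞ := by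
  simp only [klDiv]
  rw [if_neg h]

/-- The midpoint measure minimizes the sum of the two KL divergences. -/
lemma klDiv_mid_add_klDiv_mid_le {P Q R : Measure α} [IsProbabilityMeasure P]
    [IsProbabilityMeasure Q] [IsProbabilityMeasure R] :
    klDiv P (midMeasure P Q) + klDiv Q (midMeasure P Q) ≤ klDiv P R + klDiv Q R := by
  by_cases hPR : P ≪ R ∧ Integrable (llr P R) P
  swap
  · rw [klDiv_of_not hPR]; simp
  by_cases hQR : Q ≪ R ∧ Integrable (llr Q R) Q
  swap
  · rw [klDiv_of_not hQR]; simp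
  obtain ⟨hPR, iPR⟩ := hPR
  obtain ⟨hQR, iQR⟩ := hQR
  set M := midMeasure P Q with hM
  have hPM : P ≪ M := aux_ac (le_two_smul_midMeasure_left P Q)
  have hQM : Q ≪ M := aux_ac (le_two_smul_midMeasure_right P Q)
  have iPM : Integrable (llr P M) P := integrable_llr_of_le (le_two_smul_midMeasure_left P Q)
  have iQM : Integrable (llr Q M) Q := integrable_llr_of_le (le_two_smul_midMeasure_right P Q)
  have hMR : M ≪ R := by
    refine Measure.AbsolutelyContinuous.mk fun s hs h0 => ?_
    simp [hM, midMeasure, Measure.add_apply, Measure.smul_apply, hPR h0, hQR h0]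
  have hPdecomp : llr P R =ᵐ[P] llr P M + llr M R := by
    filter_upwards [hPR.ae_le (Measure.rnDeriv_mul_rnDeriv hPM (κ := R)),
      Measure.rnDeriv_pos hPM, hPM.ae_le (P.rnDeriv_ne_top M),
      hPM.ae_le (Measure.rnDeriv_pos hMR), hPR.ae_le (M.rnDeriv_ne_top R)]
      with x hmul hp1 hn1 hp2 hn2
    rw [Pi.add_apply, llr, llr, llr, ← hmul, Pi.mul_apply, ENNReal.toReal_mul,
      Real.log_mul (ENNReal.toReal_ne_zero.2 ⟨hp1.ne', hn1⟩)
        (ENNReal.toReal_ne_zero.2 ⟨hp2.ne', hn2⟩)]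
  have hQdecomp : llr Q R =ᵐ[Q] llr Q M + llr M R := by
    filter_upwards [hQR.ae_le (Measure.rnDeriv_mul_rnDeriv hQM (κ := R)),
      Measure.rnDeriv_pos hQM, hQM.ae_le (Q.rnDeriv_ne_top M),
      hQM.ae_le (Measure.rnDeriv_pos hMR), hQR.ae_le (M.rnDeriv_ne_top R)]
      with x hmul hp1 hn1 hp2 hn2
    rw [Pi.add_apply, llr, llr, llr, ← hmul, Pi.mul_apply, ENNReal.toReal_mul,
      Real.log_mul (ENNReal.toReal_ne_zero.2 ⟨hp1.ne', hn1⟩)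
        (ENNReal.toReal_ne_zero.2 ⟨hp2.ne', hn2⟩)]
  have iMR_P : Integrable (llr M R) P := by
    refine (iPR.sub iPM).congr ?_
    filter_upwards [hPdecomp] with x hx
    simp only [Pi.sub_apply, Pi.add_apply] at hx ⊢
    linarith [hx]
  have iMR_Q : Integrable (llr M R) Q := by
    refine (iQR.sub iQM).congr ?_
    filter_upwards [hQdecomp] with x hx
    simp only [Pi.sub_apply, Pi.add_apply] at hx ⊢
    linarith [hx]
  have iMR_M : Integrable (llr M R) M :=
    ((iMR_P.smul_measure (by simp)).add_measure (iMR_Q.smul_measure (by simp)) :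
      Integrable (llr M R) ((2⁻¹ : ℝ≥0∞) • P + (2⁻¹ : ℝ≥0∞) • Q))
  have gibbs : 0 ≤ ∫ x, llr M R x ∂M := integral_llr_nonneg hMR iMR_M
  have intM : ∫ x, llr M R x ∂M
      = 2⁻¹ * ∫ x, llr M R x ∂P + 2⁻¹ * ∫ x, llr M R x ∂Q := by
    have h2 : ∫ x, llr M R x ∂((2⁻¹ : ℝ≥0∞) • P + (2⁻¹ : ℝ≥0∞) • Q)
        = 2⁻¹ * ∫ x, llr M R x ∂P + 2⁻¹ * ∫ x, llr M R x ∂Q := by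
      rw [integral_add_measure (iMR_P.smul_measure (by simp))
        (iMR_Q.smul_measure (by simp)), integral_smul_measure, integral_smul_measure]
      norm_num [ENNReal.toReal_inv]
    exact h2
  have eP : ∫ x, llr P R x ∂P = ∫ x, llr P M x ∂P + ∫ x, llr M R x ∂P := by
    rw [← integral_add iPM iMR_P]
    exact integral_congr_ae hPdecomp
  have eQ : ∫ x, llr Q R x ∂Q = ∫ x, llr Q M x ∂Q + ∫ x, llr M R x ∂Q := by
    rw [← integral_add iQM iMR_Q]
    exact integral_congr_ae hQdecomp
  have hPnn : 0 ≤ ∫ x, llr P M x ∂P := integral_llr_nonneg hPM iPM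
  have hQnn : 0 ≤ ∫ x, llr Q M x ∂Q := integral_llr_nonneg hQM iQM
  rw [klDiv_of_ac hPM iPM, klDiv_of_ac hQM iQM, klDiv_of_ac hPR iPR, klDiv_of_ac hQR iQR]
  calc ENNReal.ofReal (∫ x, llr P M x ∂P) + ENNReal.ofReal (∫ x, llr Q M x ∂Q)
      = ENNReal.ofReal (∫ x, llr P M x ∂P + ∫ x, llr Q M x ∂Q) :=
        (ENNReal.ofReal_add hPnn hQnn).symm
  _ ≤ ENNReal.ofReal (∫ x, llr P R x ∂P + ∫ x, llr Q R x ∂Q) := by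
        refine ENNReal.ofReal_le_ofReal ?_
        rw [eP, eQ]
        nlinarith [gibbs, intM]
  _ ≤ ENNReal.ofReal (∫ x, llr P R x ∂P) + ENNReal.ofReal (∫ x, llr Q R x ∂Q) :=
        ENNReal.ofReal_add_le

lemma klDiv_map_equiv {β : Type*} [MeasurableSpace β] (e : α ≃ᵐ β) (μ ν : Measure α)
    [IsFiniteMeasure μ] [IsFiniteMeasure ν] :
    klDiv (μ.map e) (ν.map e) = klDiv μ ν := by
  by_cases hac : μ ≪ ν
  · have hmac : μ.map e ≪ ν.map e := hac.map e.measurable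
    have hmeas : AEStronglyMeasurable (llr (μ.map e) (ν.map e)) (μ.map e) :=
      (measurable_llr _ _).aestronglyMeasurable
    have hllr : (fun x => llr (μ.map e) (ν.map e) (e x)) =ᵐ[μ] llr μ ν := by
      filter_upwards [hac.ae_le (e.measurableEmbedding.rnDeriv_map μ ν)] with x hx
      rw [llr, llr, hx]
    have hInt : Integrable (llr (μ.map e) (ν.map e)) (μ.map e) ↔ Integrable (llr μ ν) μ := by
      rw [integrable_map_measure hmeas e.measurable.aemeasurable]
      exact integrable_congr hllr
    by_cases hint : Integrable (llr μ ν) μ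
    · rw [klDiv_of_ac hmac (hInt.mpr hint), klDiv_of_ac hac hint]
      congr 1
      rw [integral_map e.measurable.aemeasurable hmeas]
      exact integral_congr_ae hllr
    · rw [klDiv_of_not (fun hc => hint (hInt.mp hc.2)), klDiv_of_not (fun hc => hint hc.2)]
  · have hnm : ¬ μ.map e ≪ ν.map e := by
      intro hc
      refine hac ?_
      have h2 := hc.map e.symm.measurable
      rwa [Measure.map_map e.symm.measurable e.measurable,
        Measure.map_map e.symm.measurable e.measurable, MeasurableEquiv.symm_comp_self,
        Measure.map_id, Measure.map_id] at h2
    rw [klDiv_of_not (fun hc => hnm hc.1), klDiv_of_not (fun hc => hac hc.1)]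

lemma jsDiv_map_equiv {β : Type*} [MeasurableSpace β] (e : α ≃ᵐ β) (μ ν : Measure α)
    [IsFiniteMeasure μ] [IsFiniteMeasure ν] :
    jsDiv (μ.map e) (ν.map e) = jsDiv μ ν := by
  have hmid : midMeasure (μ.map e) (ν.map e) = (midMeasure μ ν).map e := by
    simp only [midMeasure, Measure.map_add _ _ e.measurable, Measure.map_smul]
  rw [jsDiv, jsDiv, hmid, klDiv_map_equiv e μ (midMeasure μ ν),
    klDiv_map_equiv e ν (midMeasure μ ν)]

end Aux

section ChainRule

open MeasurableSpace in
/-- Chain-rule inequality for the KL divergence of composition-products. -/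
lemma klDiv_compProd_le {Y X : Type*} [MeasurableSpace Y] [MeasurableSpace X]
    [CountablyGenerated X] (μ ν : Measure Y) [IsProbabilityMeasure μ] [IsProbabilityMeasure ν]
    (κ η : Kernel Y X) [IsMarkovKernel κ] [IsMarkovKernel η]
    (hμν : μ ≤ (2 : ℝ≥0∞) • ν) (hκη : ∀ y, κ y ≤ (2 : ℝ≥0∞) • η y) :
    klDiv (μ ⊗ₘ κ) (ν ⊗ₘ η) ≤ klDiv μ ν + ∫⁻ y, klDiv (κ y) (η y) ∂μ := by
  have hac : μ ≪ ν := aux_ac hμν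
  have hacκ : ∀ y, κ y ≪ η y := fun y => aux_ac (hκη y)
  set f : Y → ℝ≥0∞ := μ.rnDeriv ν with hf
  set g : Y → X → ℝ≥0∞ := Kernel.rnDeriv κ η with hg
  have hf_meas : Measurable f := Measure.measurable_rnDeriv μ ν
  have hg_meas : Measurable (Function.uncurry g) := Kernel.measurable_rnDeriv κ η
  set h : Y × X → ℝ≥0∞ := fun p => f p.1 * g p.1 p.2 with hh
  have hh_meas : Measurable h := (hf_meas.comp measurable_fst).mul hg_meas
  -- kernel rnDeriv agrees with measure rnDeriv
  have hgrn : ∀ y, g y =ᵐ[η y] (κ y).rnDeriv (η y) := fun y => Kernel.rnDeriv_eq_rnDeriv_measure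
  -- rectangle identity
  have key : ∀ {s : Set Y} {t : Set X}, MeasurableSet s → MeasurableSet t →
      ∫⁻ p in s ×ˢ t, h p ∂(ν ⊗ₘ η) = (μ ⊗ₘ κ) (s ×ˢ t) := by
    intro s t hs ht
    rw [Measure.setLIntegral_compProd hh_meas hs ht]
    have h1 : ∀ y, ∫⁻ x in t, h (y, x) ∂η y = f y * κ y t := by
      intro y
      rw [show (fun x => h (y, x)) = fun x => f y * g y x from rfl]
      rw [lintegral_const_mul _ (Kernel.measurable_rnDeriv_right κ η y)]
      congr 1
      calc ∫⁻ x in t, g y x ∂η y = ∫⁻ x in t, (κ y).rnDeriv (η y) x ∂η y :=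
            lintegral_congr_ae (ae_restrict_of_ae (hgrn y))
      _ = κ y t := Measure.setLIntegral_rnDeriv (hacκ y) t
    calc ∫⁻ y in s, ∫⁻ x in t, h (y, x) ∂η y ∂ν = ∫⁻ y in s, f y * κ y t ∂ν :=
          setLIntegral_congr_fun hs (fun y _ => h1 y)
    _ = ∫⁻ y in s, κ y t ∂μ := by
        have h2 : ∫⁻ y in s, (fun y => κ y t) y ∂(ν.withDensity f)
            = ∫⁻ y in s, (f * fun y => κ y t) y ∂ν := by
          rw [restrict_withDensity hs, lintegral_withDensity_eq_lintegral_mul _ hf_meas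
            (Kernel.measurable_coe κ ht)]
        rw [Measure.withDensity_rnDeriv_eq μ ν hac] at h2
        simpa using h2.symm
    _ = (μ ⊗ₘ κ) (s ×ˢ t) := (Measure.compProd_apply_prod hs ht).symm
  -- the compProd is a withDensity of the other compProd
  have hWD : μ ⊗ₘ κ = (ν ⊗ₘ η).withDensity h := by
    have huniv : ((ν ⊗ₘ η).withDensity h) Set.univ = (μ ⊗ₘ κ) Set.univ := by
      rw [withDensity_apply _ MeasurableSet.univ, ← Set.univ_prod_univ]
      exact key MeasurableSet.univ MeasurableSet.univ
    have hfin : IsFiniteMeasure ((ν ⊗ₘ η).withDensity h) := by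
      constructor
      rw [huniv]
      exact measure_lt_top _ _
    refine (MeasureTheory.ext_of_generate_finite _ generateFrom_prod.symm isPiSystem_prod
      ?_ huniv).symm
    rintro _ ⟨s, hs, t, ht, rfl⟩
    rw [withDensity_apply _ ((hs : MeasurableSet s).prod ht)]
    exact key hs ht
  have hacP : μ ⊗ₘ κ ≪ ν ⊗ₘ η := hWD ▸ withDensity_absolutelyContinuous _ _
  have hrn : (μ ⊗ₘ κ).rnDeriv (ν ⊗ₘ η) =ᵐ[ν ⊗ₘ η] h := by
    rw [hWD]; exact Measure.rnDeriv_withDensity _ hh_meas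
  -- a.e. decomposition of llr
  set B : Y × X → ℝ := fun p => log (g p.1 p.2).toReal with hB
  set A : Y × X → ℝ := fun p => llr μ ν p.1 with hA
  have hae : ∀ᵐ p ∂(μ ⊗ₘ κ), llr (μ ⊗ₘ κ) (ν ⊗ₘ η) p = A p + B p := by
    have h1 : ∀ᵐ p ∂(μ ⊗ₘ κ), (μ ⊗ₘ κ).rnDeriv (ν ⊗ₘ η) p = h p := hacP.ae_le hrn
    have hffst : ∀ᵐ p ∂(μ ⊗ₘ κ), 0 < f p.1 ∧ f p.1 ≠ ∞ := by
      refine Measure.ae_compProd_of_ae_ae ?_ ?_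
      · exact (measurableSet_lt measurable_const (hf_meas.comp measurable_fst)).inter
          ((hf_meas.comp measurable_fst) (measurableSet_singleton ∞)).compl
      · filter_upwards [Measure.rnDeriv_pos hac, hac.ae_le (μ.rnDeriv_ne_top ν)] with y h1 h2
        exact ae_of_all _ fun x => ⟨h1, h2⟩
    have hgae : ∀ᵐ p ∂(μ ⊗ₘ κ), 0 < g p.1 p.2 ∧ g p.1 p.2 ≠ ∞ := by
      refine Measure.ae_compProd_of_ae_ae ?_ ?_
      · exact ((measurableSet_lt measurable_const hg_meas).inter
          (hg_meas (measurableSet_singleton ∞)).compl)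
      · refine ae_of_all _ fun y => ?_
        filter_upwards [Kernel.rnDeriv_pos (hacκ y), (hacκ y).ae_le (Kernel.rnDeriv_ne_top κ η)]
          with x h1 h2
        exact ⟨h1, h2⟩
    filter_upwards [h1, hffst, hgae] with p hp1 hp2 hp3
    rw [llr, hp1, hh, ENNReal.toReal_mul,
      Real.log_mul (ENNReal.toReal_ne_zero.2 ⟨hp2.1.ne', hp2.2⟩)
        (ENNReal.toReal_ne_zero.2 ⟨hp3.1.ne', hp3.2⟩)]
    rfl
  -- integrability of the pieces
  have hmapfst : (μ ⊗ₘ κ).map Prod.fst = μ := by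
    have := Measure.fst_compProd μ κ
    rwa [Measure.fst] at this
  have hμint : Integrable (llr μ ν) μ := integrable_llr_of_le hμν
  have hA_int : Integrable A (μ ⊗ₘ κ) := by
    have h2 : Integrable (llr μ ν) ((μ ⊗ₘ κ).map Prod.fst) := by rw [hmapfst]; exact hμint
    exact (integrable_map_measure ((measurable_llr _ _).aestronglyMeasurable)
      measurable_fst.aemeasurable).mp h2
  have hB_meas : StronglyMeasurable B :=
    (Real.measurable_log.comp hg_meas.ennreal_toReal).stronglyMeasurable
  have hB_int : Integrable B (μ ⊗ₘ κ) := by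
    refine ⟨hB_meas.aestronglyMeasurable, ?_⟩
    have hm : Measurable fun p => ‖B p‖ₑ :=
      (Real.measurable_log.comp hg_meas.ennreal_toReal).enorm
    rw [HasFiniteIntegral, Measure.lintegral_compProd hm]
    have hbound : ∀ y, ∫⁻ x, (‖B (y, x)‖₊ : ℝ≥0∞) ∂κ y ≤ ENNReal.ofReal (log 2) + 1 := by
      intro y
      have hcongr : ∫⁻ x, (‖B (y, x)‖₊ : ℝ≥0∞) ∂κ y = ∫⁻ x, (‖llr (κ y) (η y) x‖₊ : ℝ≥0∞) ∂κ y := by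
        refine lintegral_congr_ae ?_
        filter_upwards [(hacκ y).ae_le (hgrn y)] with x hx
        show (‖log (g y x).toReal‖₊ : ℝ≥0∞) = (‖log (((κ y).rnDeriv (η y)) x).toReal‖₊ : ℝ≥0∞)
        rw [hx]
      rw [hcongr]
      have := lintegral_nnorm_llr_le (hκη y)
      simpa using this
    calc ∫⁻ y, ∫⁻ x, (‖B (y, x)‖₊ : ℝ≥0∞) ∂κ y ∂μ
        ≤ ∫⁻ _, (ENNReal.ofReal (log 2) + 1) ∂μ := lintegral_mono hbound
    _ = ENNReal.ofReal (log 2) + 1 := by simp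
    _ < ∞ := by
        exact ENNReal.add_lt_top.2 ⟨ENNReal.ofReal_lt_top, ENNReal.one_lt_top⟩
  have hllr_int : Integrable (llr (μ ⊗ₘ κ) (ν ⊗ₘ η)) (μ ⊗ₘ κ) :=
    (hA_int.add hB_int).congr (hae.mono fun p hp => hp.symm)
  -- compute the integral
  set F : Y → ℝ := fun y => ∫ x, llr (κ y) (η y) x ∂κ y with hF
  have hinner : ∀ y, ∫ x, B (y, x) ∂κ y = F y := by
    intro y
    refine integral_congr_ae ?_
    filter_upwards [(hacκ y).ae_le (hgrn y)] with x hx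
    show log (g y x).toReal = log (((κ y).rnDeriv (η y)) x).toReal
    rw [hx]
  have hI : ∫ p, llr (μ ⊗ₘ κ) (ν ⊗ₘ η) p ∂(μ ⊗ₘ κ)
      = (∫ y, llr μ ν y ∂μ) + ∫ y, F y ∂μ := by
    rw [integral_congr_ae hae, integral_add hA_int hB_int]
    congr 1
    · rw [hA]
      have h2 : ∫ p, llr μ ν p.1 ∂(μ ⊗ₘ κ) = ∫ y, llr μ ν y ∂((μ ⊗ₘ κ).map Prod.fst) := by
        rw [integral_map measurable_fst.aemeasurable]
        · rw [hmapfst]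
          exact (measurable_llr _ _).aestronglyMeasurable
      rw [h2, hmapfst]
    · rw [Measure.integral_compProd hB_int]
      exact integral_congr_ae (ae_of_all _ hinner)
  have hF_nonneg : ∀ y, 0 ≤ F y := fun y =>
    integral_llr_nonneg (hacκ y) (integrable_llr_of_le (hκη y))
  have hF_int : Integrable F μ := by
    have hmeasF : StronglyMeasurable (fun y => ∫ x, B (y, x) ∂κ y) :=
      hB_meas.integral_kernel_prod_right'
    refine Integrable.mono' (integrable_const (log 2 + 1))
      (hmeasF.aestronglyMeasurable.congr (ae_of_all _ hinner)) (ae_of_all _ fun y => ?_)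
    rw [Real.norm_eq_abs, abs_of_nonneg (hF_nonneg y)]
    calc F y ≤ ∫ x, ‖llr (κ y) (η y) x‖ ∂κ y :=
          norm_integral_le_integral_norm _ |>.trans_eq' (by
            rw [Real.norm_eq_abs, abs_of_nonneg (hF_nonneg y)])
    _ ≤ log 2 + 1 := integral_norm_llr_le (hκη y)
  -- conclude
  rw [klDiv_of_ac hacP hllr_int, hI]
  calc ENNReal.ofReal ((∫ y, llr μ ν y ∂μ) + ∫ y, F y ∂μ)
      ≤ ENNReal.ofReal (∫ y, llr μ ν y ∂μ) + ENNReal.ofReal (∫ y, F y ∂μ) :=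
        ENNReal.ofReal_add_le
  _ ≤ klDiv μ ν + ∫⁻ y, klDiv (κ y) (η y) ∂μ := by
      refine add_le_add (le_of_eq ?_) ?_
      · rw [klDiv_of_ac hac hμint]
      · rw [ofReal_integral_eq_lintegral_ofReal hF_int (ae_of_all _ hF_nonneg)]
        refine lintegral_mono fun y => ?_
        rw [klDiv_of_ac (hacκ y) (integrable_llr_of_le (hκη y))]

end ChainRule

section MidKernel

variable {Y X : Type*} [MeasurableSpace Y] [MeasurableSpace X]

/-- The midpoint kernel of two kernels. -/
noncomputable def midKernel (κP κQ : Kernel Y X) : Kernel Y X where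
  toFun := fun y => midMeasure (κP y) (κQ y)
  measurable' := by
    refine Measure.measurable_of_measurable_coe _ fun s hs => ?_
    simp only [midMeasure, Measure.coe_add, Measure.coe_smul, Pi.add_apply, Pi.smul_apply,
      smul_eq_mul]
    exact ((κP.measurable_coe hs).const_mul _).add ((κQ.measurable_coe hs).const_mul _)

lemma midKernel_apply (κP κQ : Kernel Y X) (y : Y) :
    midKernel κP κQ y = midMeasure (κP y) (κQ y) := rfl

instance (κP κQ : Kernel Y X) [IsMarkovKernel κP] [IsMarkovKernel κQ] :
    IsMarkovKernel (midKernel κP κQ) :=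
  ⟨fun y => by rw [midKernel_apply]; infer_instance⟩

end MidKernel

/-- Appendix Lemma 2: decomposition of the joint Jensen–Shannon divergence into a marginal
term and two expected conditional terms, where `κP`, `κQ` disintegrate `P`, `Q` over their
`Y`-marginals. -/
theorem jsDiv_decomposition
    {X Y : Type*} [MeasurableSpace X] [StandardBorelSpace X]
    [MeasurableSpace Y] [StandardBorelSpace Y]
    (P Q : Measure (X × Y)) [IsProbabilityMeasure P] [IsProbabilityMeasure Q]
    (κP κQ : Kernel Y X) [IsMarkovKernel κP] [IsMarkovKernel κQ]
    (hP : P = ((P.map Prod.snd) ⊗ₘ κP).map Prod.swap)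
    (hQ : Q = ((Q.map Prod.snd) ⊗ₘ κQ).map Prod.swap) :
    jsDiv P Q ≤ jsDiv (P.map Prod.snd) (Q.map Prod.snd)
      + ∫⁻ y, jsDiv (κP y) (κQ y) ∂(P.map Prod.snd)
      + ∫⁻ y, jsDiv (κP y) (κQ y) ∂(Q.map Prod.snd) := by
  set μ := P.map Prod.snd with hμ
  set ν := Q.map Prod.snd with hν
  haveI : IsProbabilityMeasure μ := Measure.isProbabilityMeasure_map measurable_snd.aemeasurable
  haveI : IsProbabilityMeasure ν := Measure.isProbabilityMeasure_map measurable_snd.aemeasurable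
  set e : (Y × X) ≃ᵐ (X × Y) := MeasurableEquiv.prodComm with he
  have hPe : P = (μ ⊗ₘ κP).map e := hP
  have hQe : Q = (ν ⊗ₘ κQ).map e := hQ
  have hjs : jsDiv P Q = jsDiv (μ ⊗ₘ κP) (ν ⊗ₘ κQ) := by
    conv_lhs => rw [hPe, hQe]
    exact jsDiv_map_equiv e _ _
  rw [hjs]
  set κm := midKernel κP κQ with hκm
  set Mm := midMeasure μ ν with hMm
  set R : Measure (Y × X) := Mm ⊗ₘ κm with hR
  haveI : IsProbabilityMeasure R := by
    constructor
    rw [hR, Measure.compProd_apply_univ, hMm]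
    exact measure_univ
  have hmin : jsDiv (μ ⊗ₘ κP) (ν ⊗ₘ κQ)
      ≤ 2⁻¹ * klDiv (μ ⊗ₘ κP) R + 2⁻¹ * klDiv (ν ⊗ₘ κQ) R := by
    rw [jsDiv]
    calc 2⁻¹ * klDiv (μ ⊗ₘ κP) (midMeasure (μ ⊗ₘ κP) (ν ⊗ₘ κQ))
          + 2⁻¹ * klDiv (ν ⊗ₘ κQ) (midMeasure (μ ⊗ₘ κP) (ν ⊗ₘ κQ))
        = 2⁻¹ * (klDiv (μ ⊗ₘ κP) (midMeasure (μ ⊗ₘ κP) (ν ⊗ₘ κQ))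
          + klDiv (ν ⊗ₘ κQ) (midMeasure (μ ⊗ₘ κP) (ν ⊗ₘ κQ))) := by ring
    _ ≤ 2⁻¹ * (klDiv (μ ⊗ₘ κP) R + klDiv (ν ⊗ₘ κQ) R) :=
        mul_le_mul_right klDiv_mid_add_klDiv_mid_le _
    _ = 2⁻¹ * klDiv (μ ⊗ₘ κP) R + 2⁻¹ * klDiv (ν ⊗ₘ κQ) R := by ring
  have hchain1 : klDiv (μ ⊗ₘ κP) R ≤ klDiv μ Mm + ∫⁻ y, klDiv (κP y) (κm y) ∂μ :=
    klDiv_compProd_le μ Mm κP κm (le_two_smul_midMeasure_left μ ν)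
      (fun y => le_two_smul_midMeasure_left (κP y) (κQ y))
  have hchain2 : klDiv (ν ⊗ₘ κQ) R ≤ klDiv ν Mm + ∫⁻ y, klDiv (κQ y) (κm y) ∂ν :=
    klDiv_compProd_le ν Mm κQ κm (le_two_smul_midMeasure_right μ ν)
      (fun y => le_two_smul_midMeasure_right (κP y) (κQ y))
  have hI1 : 2⁻¹ * ∫⁻ y, klDiv (κP y) (κm y) ∂μ ≤ ∫⁻ y, jsDiv (κP y) (κQ y) ∂μ := by
    rw [← lintegral_const_mul' _ _ (by simp : (2⁻¹ : ℝ≥0∞) ≠ ∞)]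
    refine lintegral_mono fun y => ?_
    rw [show κm y = midMeasure (κP y) (κQ y) from rfl, jsDiv]
    exact le_self_add
  have hI2 : 2⁻¹ * ∫⁻ y, klDiv (κQ y) (κm y) ∂ν ≤ ∫⁻ y, jsDiv (κP y) (κQ y) ∂ν := by
    rw [← lintegral_const_mul' _ _ (by simp : (2⁻¹ : ℝ≥0∞) ≠ ∞)]
    refine lintegral_mono fun y => ?_
    rw [show κm y = midMeasure (κP y) (κQ y) from rfl, jsDiv]
    exact le_add_self
  calc jsDiv (μ ⊗ₘ κP) (ν ⊗ₘ κQ)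
      ≤ 2⁻¹ * klDiv (μ ⊗ₘ κP) R + 2⁻¹ * klDiv (ν ⊗ₘ κQ) R := hmin
  _ ≤ 2⁻¹ * (klDiv μ Mm + ∫⁻ y, klDiv (κP y) (κm y) ∂μ)
      + 2⁻¹ * (klDiv ν Mm + ∫⁻ y, klDiv (κQ y) (κm y) ∂ν) :=
      add_le_add (mul_le_mul_right hchain1 _) (mul_le_mul_right hchain2 _)
  _ = jsDiv μ ν + ((2⁻¹ * ∫⁻ y, klDiv (κP y) (κm y) ∂μ)
      + (2⁻¹ * ∫⁻ y, klDiv (κQ y) (κm y) ∂ν)) := by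
      rw [jsDiv, hMm]
      ring
  _ ≤ jsDiv μ ν + ((∫⁻ y, jsDiv (κP y) (κQ y) ∂μ) + ∫⁻ y, jsDiv (κP y) (κQ y) ∂ν) :=
      add_le_add le_rfl (add_le_add hI1 hI2)
  _ = jsDiv μ ν + (∫⁻ y, jsDiv (κP y) (κQ y) ∂μ) + ∫⁻ y, jsDiv (κP y) (κQ y) ∂ν := by
      rw [add_assoc]
end

section
/- Let 𝒳 and 𝒵 be standard Borel spaces and let 𝒴 be a finite label set. Let P_s and P_t be probability measures on 𝒳 × 𝒴 and let f : 𝒳 → 𝒵 be measurable. Assume: (i) P_t ≪ P_s with essentially bounded Radon–Nikodym derivative dP_t/dP_s; (ii) covariate shift holds, i.e., there is a Markov kernel κ from 𝒳 to 𝒴 with P_s = P_s^X ⊗ κ and P_t = P_t^X ⊗ κ (a common regular conditional distribution of Y given X); (iii) the representation is sufficient for the source domain: I_{P_s}(Z;Y) = I_{P_s}(X;Y) < ∞. Then covariate shift also holds in representation space: if κ_s and κ_t are Markov kernels from 𝒵 to 𝒴 that are regular conditional distributions of Y given Z under P_s and P_t respectively (i.e., P_s^{Z,Y} = P_s^Z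 ⊗ κ_s and P_t^{Z,Y} = P_t^Z ⊗ κ_t), then ∫ KL(κ_t(z) ‖ κ_s(z)) dP_t^Z(z) = 0; equivalently, κ_t(z) = κ_s(z) for P_t^Z-almost every z. (Appendix Lemma 3.) -/
open MeasureTheory ProbabilityTheory Real
open scoped ENNReal

lemma aux_klDiv_self {Ω : Type*} [MeasurableSpace Ω] (q : Measure Ω) [SigmaFinite q] :
    klDiv q q = 0 := by
  have h0 : llr q q =ᵐ[q] fun _ => (0 : ℝ) := by
    filter_upwards [Measure.rnDeriv_self q] with x hx
    simp [llr, hx]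
  rw [klDiv, if_pos ⟨Measure.AbsolutelyContinuous.rfl, (integrable_zero _ _ _).congr h0.symm⟩,
    integral_congr_ae h0]
  simp


section Aux

variable {W : Type*} [MeasurableSpace W] {Y : Type*} [Fintype Y] [MeasurableSpace Y]
  [MeasurableSingletonClass Y]

/-- Two measures on `W × Y` with `Y` finite agree if they agree on sets `A ×ˢ {y}`. -/
lemma aux_measure_ext {P Q : Measure (W × Y)}
    (h : ∀ A : Set W, MeasurableSet A → ∀ y : Y, P (A ×ˢ ({y} : Set Y)) = Q (A ×ˢ ({y} : Set Y))) :
    P = Q := by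
  ext s hs
  have hrep : s = ⋃ y : Y, ((fun w => (w, y)) ⁻¹' s) ×ˢ ({y} : Set Y) := by
    ext ⟨w, y⟩
    simp only [Set.mem_iUnion, Set.mem_prod, Set.mem_preimage, Set.mem_singleton_iff]
    constructor
    · intro hw; exact ⟨y, hw, rfl⟩
    · rintro ⟨y', hw, rfl⟩; exact hw
  have hd : Pairwise (Function.onFun Disjoint
      fun y : Y => ((fun w => (w, y)) ⁻¹' s) ×ˢ ({y} : Set Y)) := by
    intro y y' hyy'
    simp only [Function.onFun]
    refine Set.disjoint_left.2 ?_
    rintro ⟨w, c⟩ ⟨-, hc⟩ ⟨-, hc'⟩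
    simp only [Set.mem_singleton_iff] at hc hc'
    exact hyy' (hc ▸ hc')
  have hm : ∀ y : Y, MeasurableSet (((fun w => (w, y)) ⁻¹' s) ×ˢ ({y} : Set Y)) :=
    fun y => (measurable_prodMk_right hs).prod (measurableSet_singleton y)
  rw [hrep, measure_iUnion hd hm, measure_iUnion hd hm]
  exact tsum_congr fun y => h _ (measurable_prodMk_right hs) y

lemma aux_meas_eval (η : Kernel W Y) : Measurable (fun p : W × Y => η p.1 {p.2}) := by
  classical
  have heq : (fun p : W × Y => η p.1 {p.2})
      = fun p => ∑ y : Y, if p.2 = y then η p.1 {y} else 0 := by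
    funext p
    rw [Finset.sum_ite_eq Finset.univ p.2 (fun y => η p.1 {y})]
    simp
  rw [heq]
  refine Finset.measurable_sum _ fun y _ => Measurable.ite ?_ ?_ measurable_const
  · exact measurable_snd (measurableSet_singleton y)
  · exact (Kernel.measurable_coe η (measurableSet_singleton y)).comp measurable_fst

lemma aux_meas_G (η : Kernel W Y) (ρ : Measure Y) :
    Measurable (fun p : W × Y => η p.1 {p.2} / ρ {p.2}) :=
  (aux_meas_eval η).div ((measurable_of_countable (fun y => ρ {y})).comp measurable_snd)

/-- any finite measure gives zero mass to the set of points with null singleton. -/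
lemma aux_self_null (q : Measure Y) : q {y : Y | q {y} = 0} = 0 := by
  have h : {y : Y | q {y} = 0} = ⋃ y : {y : Y // q {y} = 0}, ({y.1} : Set Y) := by
    ext y; simp
  rw [h]
  exact measure_iUnion_null fun y => y.2

lemma aux_sum_singleton (q : Measure Y) : ∑ y : Y, q {y} = q Set.univ := by
  have := MeasureTheory.sum_measure_preimage_singleton (μ := q) (f := (id : Y → Y)) Finset.univ
    (fun y _ => measurableSet_singleton y)
  simpa using this

/-- density representation of a composition product with respect to a product measure. -/
lemma aux_withDensity (m : Measure W) [IsFiniteMeasure m] (η : Kernel W Y) [IsMarkovKernel η]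
    (ρ : Measure Y) [IsFiniteMeasure ρ]
    (hnull : ∀ y : Y, ρ {y} = 0 → (fun x => η x {y}) =ᵐ[m] 0) :
    m ⊗ₘ η = (m.prod ρ).withDensity (fun p => η p.1 {p.2} / ρ {p.2}) := by
  refine aux_measure_ext fun A hA y => ?_
  rw [Measure.compProd_apply_prod hA (measurableSet_singleton y),
    withDensity_apply _ (hA.prod (measurableSet_singleton y)), ← Measure.prod_restrict,
    MeasureTheory.lintegral_prod _ ((aux_meas_G η ρ).aemeasurable)]
  have hin : (fun x : W => ∫⁻ y', η x {y'} / ρ {y'} ∂(ρ.restrict {y}))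
      = fun x : W => η x {y} / ρ {y} * ρ {y} := by
    funext x
    exact lintegral_singleton (fun y' => η x {y'} / ρ {y'}) y
  rw [hin]
  by_cases hy : ρ {y} = 0
  · simp only [hy, mul_zero, lintegral_zero]
    rw [lintegral_congr_ae (ae_restrict_of_ae (hnull y hy))]
    simp
  · have : (fun x : W => η x {y} / ρ {y} * ρ {y}) = fun x : W => η x {y} := by
      funext x
      exact ENNReal.div_mul_cancel hy (measure_ne_top ρ {y})
    rw [this]

end Aux

section Aux2

variable {W : Type*} [MeasurableSpace W] {Y : Type*} [Fintype Y] [MeasurableSpace Y]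
  [MeasurableSingletonClass Y]

lemma aux_snd_singleton (m : Measure W) [SFinite m] (η : Kernel W Y) [IsSFiniteKernel η] (y : Y) :
    ((m ⊗ₘ η).map Prod.snd) {y} = ∫⁻ x, η x {y} ∂m := by
  rw [Measure.map_apply measurable_snd (measurableSet_singleton y)]
  have h : (Prod.snd ⁻¹' {y} : Set (W × Y)) = Set.univ ×ˢ ({y} : Set Y) := by
    ext ⟨w, c⟩; simp [eq_comm]
  rw [h, Measure.compProd_apply_prod MeasurableSet.univ (measurableSet_singleton y),
    setLIntegral_univ]

lemma aux_ac_s4 (m : Measure W) [IsFiniteMeasure m] (η : Kernel W Y) [IsMarkovKernel η]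
    (ρ : Measure Y) [IsFiniteMeasure ρ]
    (hnull : ∀ y : Y, ρ {y} = 0 → (fun x => η x {y}) =ᵐ[m] 0) :
    m ⊗ₘ η ≪ m.prod ρ := by
  rw [aux_withDensity m η ρ hnull]
  exact withDensity_absolutelyContinuous _ _

/-- identification of the log-likelihood ratio of a composition product against a product. -/
lemma aux_llr (m : Measure W) [IsProbabilityMeasure m] (η : Kernel W Y) [IsMarkovKernel η]
    (ρ : Measure Y) [IsProbabilityMeasure ρ]
    (hnull : ∀ y : Y, ρ {y} = 0 → (fun x => η x {y}) =ᵐ[m] 0) :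
    llr (m ⊗ₘ η) (m.prod ρ) =ᵐ[m ⊗ₘ η]
      fun p => log (η p.1 {p.2}).toReal - log (ρ {p.2}).toReal := by
  have hwd := aux_withDensity m η ρ hnull
  have hac : m ⊗ₘ η ≪ m.prod ρ := aux_ac_s4 m η ρ hnull
  have hrn : (m ⊗ₘ η).rnDeriv (m.prod ρ)
      =ᵐ[m.prod ρ] fun p => η p.1 {p.2} / ρ {p.2} := by
    conv_lhs => rw [hwd]
    exact Measure.rnDeriv_withDensity _ (aux_meas_G η ρ)
  have hrn' : (m ⊗ₘ η).rnDeriv (m.prod ρ)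
      =ᵐ[m ⊗ₘ η] fun p => η p.1 {p.2} / ρ {p.2} := hac.ae_eq hrn
  -- a.e. positivity of the numerator
  have h1 : ∀ᵐ p ∂(m ⊗ₘ η), η p.1 {p.2} ≠ 0 := by
    have hS : MeasurableSet {p : W × Y | η p.1 {p.2} = 0} :=
      aux_meas_eval η (measurableSet_singleton 0)
    rw [ae_iff]
    have : {p : W × Y | ¬ η p.1 {p.2} ≠ 0} = {p : W × Y | η p.1 {p.2} = 0} := by
      ext p; simp
    rw [this, Measure.compProd_apply hS]
    simp only [Set.preimage_setOf_eq]
    have hz : ∀ x : W, η x {y : Y | η x {y} = 0} = 0 := fun x => aux_self_null (η x)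
    simp [hz]
  -- a.e. positivity of the denominator
  have h2 : ∀ᵐ p ∂(m ⊗ₘ η), ρ {p.2} ≠ 0 := by
    have h2' : ∀ᵐ p ∂(m.prod ρ), ρ {p.2} ≠ 0 := by
      rw [ae_iff]
      have h1' : {p : W × Y | ¬ ρ {p.2} ≠ 0} = Set.univ ×ˢ {y : Y | ρ {y} = 0} := by
        ext ⟨w, c⟩; simp [eq_comm]
      rw [h1', Measure.prod_prod, aux_self_null ρ]
      simp
    exact h2'.filter_mono hac.ae_le
  filter_upwards [hrn', h1, h2] with p hp hp1 hp2
  rw [llr, hp, ENNReal.toReal_div,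
    Real.log_div (ENNReal.toReal_ne_zero.2 ⟨hp1, measure_ne_top _ _⟩)
      (ENNReal.toReal_ne_zero.2 ⟨hp2, measure_ne_top _ _⟩)]

end Aux2

/-- pointwise Gibbs inequality with the equality case. -/
lemma aux_gibbs {a b : ℝ} (ha : 0 ≤ a) (hb : 0 ≤ b) (hab : b = 0 → a = 0) :
    a - b ≤ a * (log a - log b) ∧ (a * (log a - log b) = a - b → a = b) := by
  rcases eq_or_lt_of_le hb with hb0 | hb0
  · have ha0 : a = 0 := hab hb0.symm
    constructor
    · simp [ha0, ← hb0]
    · intro _; rw [ha0, ← hb0]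
  rcases eq_or_lt_of_le ha with ha0 | ha0
  · constructor
    · rw [← ha0]; simp; linarith
    · intro h; rw [← ha0] at h; simp at h; linarith
  · have hba : 0 < b / a := by positivity
    have hlog : log (b / a) ≤ b / a - 1 := Real.log_le_sub_one_of_pos hba
    have hlogdiv : log (b / a) = log b - log a := Real.log_div (ne_of_gt hb0) (ne_of_gt ha0)
    constructor
    · have := mul_le_mul_of_nonneg_left hlog (le_of_lt ha0)
      rw [hlogdiv] at this
      have h2 : a * (b / a - 1) = b - a := by field_simp
      nlinarith
    · intro h
      by_contra hne
      have hba1 : b / a ≠ 1 := by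
        intro h1
        exact hne ((div_eq_one_iff_eq (ne_of_gt ha0)).1 h1).symm
      have hlt : log (b / a) < b / a - 1 := Real.log_lt_sub_one_of_pos hba hba1
      have := mul_lt_mul_of_pos_left hlt ha0
      rw [hlogdiv] at this
      have h2 : a * (b / a - 1) = b - a := by field_simp
      nlinarith

section Aux3

variable {W : Type*} [MeasurableSpace W] {Y : Type*} [Fintype Y] [MeasurableSpace Y]
  [MeasurableSingletonClass Y]

lemma aux_sum_one (q : Measure Y) [IsProbabilityMeasure q] :
    ∑ y : Y, (q {y}).toReal = 1 := by
  rw [← ENNReal.toReal_sum (fun y _ => measure_ne_top _ _), aux_sum_singleton q]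
  simp

lemma aux_integral_llr (m : Measure W) [IsProbabilityMeasure m] (η : Kernel W Y) [IsMarkovKernel η]
    (ρ : Measure Y) [IsProbabilityMeasure ρ]
    (hnull : ∀ y : Y, ρ {y} = 0 → (fun x => η x {y}) =ᵐ[m] 0)
    (hint : Integrable (llr (m ⊗ₘ η) (m.prod ρ)) (m ⊗ₘ η)) :
    ∫ p, llr (m ⊗ₘ η) (m.prod ρ) p ∂(m ⊗ₘ η)
      = ∫ x, ∑ y : Y, (η x {y}).toReal * (log (η x {y}).toReal - log (ρ {y}).toReal) ∂m
    ∧ 0 ≤ ∫ p, llr (m ⊗ₘ η) (m.prod ρ) p ∂(m ⊗ₘ η) := by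
  set F : W × Y → ℝ := fun p => log (η p.1 {p.2}).toReal - log (ρ {p.2}).toReal with hF
  have hae := aux_llr m η ρ hnull
  have hFi : Integrable F (m ⊗ₘ η) := hint.congr hae
  have h1 : ∫ p, llr (m ⊗ₘ η) (m.prod ρ) p ∂(m ⊗ₘ η) = ∫ p, F p ∂(m ⊗ₘ η) :=
    integral_congr_ae hae
  have h2 : ∫ p, F p ∂(m ⊗ₘ η) = ∫ x, ∫ y, F (x, y) ∂(η x) ∂m :=
    Measure.integral_compProd hFi
  have h3 : ∀ x : W, ∫ y, F (x, y) ∂(η x)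
      = ∑ y : Y, (η x {y}).toReal * (log (η x {y}).toReal - log (ρ {y}).toReal) := by
    intro x
    rw [integral_fintype (Integrable.of_finite)]
    simp [hF, smul_eq_mul, measureReal_def]
  have hsupp : ∀ᵐ x ∂m, ∀ y : Y, ρ {y} = 0 → η x {y} = 0 := by
    rw [ae_all_iff]
    intro y
    by_cases hy : ρ {y} = 0
    · filter_upwards [hnull y hy] with x hx _; exact hx
    · exact ae_of_all _ fun x h => absurd h hy
  have hnon : ∀ᵐ x ∂m,
      0 ≤ ∑ y : Y, (η x {y}).toReal * (log (η x {y}).toReal - log (ρ {y}).toReal) := by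
    filter_upwards [hsupp] with x hx
    have key : ∀ y : Y, (η x {y}).toReal - (ρ {y}).toReal
        ≤ (η x {y}).toReal * (log (η x {y}).toReal - log (ρ {y}).toReal) := by
      intro y
      refine (aux_gibbs ENNReal.toReal_nonneg ENNReal.toReal_nonneg ?_).1
      intro h0
      have hρ0 : ρ {y} = 0 :=
        (((ρ {y}).toReal_eq_zero_iff).1 h0).resolve_right (measure_ne_top _ _)
      rw [hx y hρ0]
      simp
    calc (0:ℝ) = ∑ y : Y, ((η x {y}).toReal - (ρ {y}).toReal) := by
          rw [Finset.sum_sub_distrib, aux_sum_one (η x), aux_sum_one ρ, sub_self]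
      _ ≤ _ := Finset.sum_le_sum fun y _ => key y
  refine ⟨h1.trans (h2.trans (integral_congr_ae (ae_of_all _ h3))), ?_⟩
  rw [h1, h2]
  refine integral_nonneg_of_ae ?_
  filter_upwards [hnon] with x hx
  rw [h3 x]
  exact hx

end Aux3

/-- Appendix Lemma 3: under covariate shift with a bounded density ratio and a representation
that is sufficient for the source domain, covariate shift also holds in representation space:
the regular conditional distributions of the label given the representation agree
`P_t^Z`-almost everywhere. -/
theorem covariate_shift_in_representation_space
    {X Z : Type*} [MeasurableSpace X] [StandardBorelSpace X]
    [MeasurableSpace Z] [StandardBorelSpace Z]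
    {Y : Type*} [Fintype Y] [MeasurableSpace Y] [MeasurableSingletonClass Y]
    (Ps Pt : Measure (X × Y)) [IsProbabilityMeasure Ps] [IsProbabilityMeasure Pt]
    (f : X → Z) (hf : Measurable f)
    -- (i) absolute continuity with essentially bounded density ratio
    (hac : Pt ≪ Ps)
    (hbdd : ∃ B : ℝ≥0∞, B ≠ ∞ ∧ ∀ᵐ ω ∂Ps, Pt.rnDeriv Ps ω ≤ B)
    -- (ii) covariate shift: a common regular conditional distribution of Y given X
    (κ : Kernel X Y) [IsMarkovKernel κ]
    (hs : Ps = (Ps.map Prod.fst) ⊗ₘ κ) (ht : Pt = (Pt.map Prod.fst) ⊗ₘ κ)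
    -- (iii) sufficiency of the representation: I(Z;Y) = I(X;Y) < ∞ under the source
    (hsuff : klDiv (Ps.map (fun p => (f p.1, p.2)))
        ((Ps.map (fun p => f p.1)).prod (Ps.map Prod.snd))
      = klDiv Ps ((Ps.map Prod.fst).prod (Ps.map Prod.snd)))
    (hfin : klDiv Ps ((Ps.map Prod.fst).prod (Ps.map Prod.snd)) ≠ ∞)
    -- regular conditional distributions of Y given Z under source and target
    (κs κt : Kernel Z Y) [IsMarkovKernel κs] [IsMarkovKernel κt]
    (hks : Ps.map (fun p => (f p.1, p.2)) = (Ps.map (fun p => f p.1)) ⊗ₘ κs)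
    (hkt : Pt.map (fun p => (f p.1, p.2)) = (Pt.map (fun p => f p.1)) ⊗ₘ κt) :
    (∫⁻ z, klDiv (κt z) (κs z) ∂(Pt.map (fun p => f p.1))) = 0 ∧
      ∀ᵐ z ∂(Pt.map (fun p => f p.1)), κt z = κs z := by
  classical
  have hmf : Measurable (fun p : X × Y => (f p.1, p.2)) :=
    (hf.comp measurable_fst).prodMk measurable_snd
  have hffst : Measurable (fun p : X × Y => f p.1) := hf.comp measurable_fst
  set μ : Measure X := Ps.map Prod.fst with hμdef
  set ν : Measure Y := Ps.map Prod.snd with hνdef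
  set PZ : Measure (Z × Y) := Ps.map (fun p => (f p.1, p.2)) with hPZdef
  set μZ : Measure Z := Ps.map (fun p => f p.1) with hμZdef
  set μt : Measure X := Pt.map Prod.fst with hμtdef
  set PZt : Measure (Z × Y) := Pt.map (fun p => (f p.1, p.2)) with hPZtdef
  set μZt : Measure Z := Pt.map (fun p => f p.1) with hμZtdef
  haveI : IsProbabilityMeasure μ := Measure.isProbabilityMeasure_map measurable_fst.aemeasurable
  haveI : IsProbabilityMeasure ν := Measure.isProbabilityMeasure_map measurable_snd.aemeasurable
  haveI : IsProbabilityMeasure PZ := Measure.isProbabilityMeasure_map hmf.aemeasurable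
  haveI : IsProbabilityMeasure μZ := Measure.isProbabilityMeasure_map hffst.aemeasurable
  haveI : IsProbabilityMeasure μt := Measure.isProbabilityMeasure_map measurable_fst.aemeasurable
  haveI : IsProbabilityMeasure μZt := Measure.isProbabilityMeasure_map hffst.aemeasurable
  -- marginals
  have hPZsnd : PZ.map Prod.snd = ν := by
    rw [hPZdef, Measure.map_map measurable_snd hmf]
    rfl
  have hμZf : μZ = μ.map f := by
    rw [hμdef, hμZdef, Measure.map_map hf measurable_fst]
    rfl
  have hμZtf : μZt = μt.map f := by
    rw [hμtdef, hμZtdef, Measure.map_map hf measurable_fst]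
    rfl
  -- null conditions relative to the label marginal
  have hnullκ : ∀ y : Y, ν {y} = 0 → (fun x => κ x {y}) =ᵐ[μ] 0 := by
    intro y hy
    have h0 : ∫⁻ x, κ x {y} ∂μ = 0 := by
      rw [← aux_snd_singleton μ κ y, ← hs, ← hνdef]
      exact hy
    exact (lintegral_eq_zero_iff (Kernel.measurable_coe κ (measurableSet_singleton y))).1 h0
  have hnullκs : ∀ y : Y, ν {y} = 0 → (fun z => κs z {y}) =ᵐ[μZ] 0 := by
    intro y hy
    have h0 : ∫⁻ z, κs z {y} ∂μZ = 0 := by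
      rw [← aux_snd_singleton μZ κs y, ← hks, hPZsnd]
      exact hy
    exact (lintegral_eq_zero_iff (Kernel.measurable_coe κs (measurableSet_singleton y))).1 h0
  -- unpack the finiteness/sufficiency hypotheses
  rw [hs] at hfin
  rw [hs, hks] at hsuff
  have hCs : (μ ⊗ₘ κ) ≪ μ.prod ν ∧ Integrable (llr (μ ⊗ₘ κ) (μ.prod ν)) (μ ⊗ₘ κ) := by
    by_contra hcon
    rw [klDiv, if_neg hcon] at hfin
    exact hfin rfl
  have hfinZ : klDiv (μZ ⊗ₘ κs) (μZ.prod ν) ≠ ⊤ := by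
    rw [hsuff]; exact hfin
  have hCz : (μZ ⊗ₘ κs) ≪ μZ.prod ν ∧
      Integrable (llr (μZ ⊗ₘ κs) (μZ.prod ν)) (μZ ⊗ₘ κs) := by
    by_contra hcon
    rw [klDiv, if_neg hcon] at hfinZ
    exact hfinZ rfl
  obtain ⟨hs_eq, hs_nonneg⟩ := aux_integral_llr μ κ ν hnullκ hCs.2
  obtain ⟨hz_eq, hz_nonneg⟩ := aux_integral_llr μZ κs ν hnullκs hCz.2
  have hIeq : ∫ p, llr (μ ⊗ₘ κ) (μ.prod ν) p ∂(μ ⊗ₘ κ)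
      = ∫ q, llr (μZ ⊗ₘ κs) (μZ.prod ν) q ∂(μZ ⊗ₘ κs) := by
    rw [klDiv, if_pos hCz, klDiv, if_pos hCs] at hsuff
    exact ((ENNReal.ofReal_eq_ofReal_iff hz_nonneg hs_nonneg).1 hsuff).symm
  -- the pushforward of the source compProd is the representation-space compProd
  have hmap : (μ ⊗ₘ κ).map (fun p : X × Y => (f p.1, p.2)) = μZ ⊗ₘ κs := by
    rw [← hs, ← hPZdef]
    exact hks
  -- llr identifications
  set F : X × Y → ℝ := fun p => log (κ p.1 {p.2}).toReal - log (ν {p.2}).toReal with hFdef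
  set Fs : Z × Y → ℝ := fun q => log (κs q.1 {q.2}).toReal - log (ν {q.2}).toReal with hFsdef
  have hL_ae : llr (μ ⊗ₘ κ) (μ.prod ν) =ᵐ[μ ⊗ₘ κ] F := aux_llr μ κ ν hnullκ
  have hLs_ae : llr (μZ ⊗ₘ κs) (μZ.prod ν) =ᵐ[μZ ⊗ₘ κs] Fs := aux_llr μZ κs ν hnullκs
  have hF_int : Integrable F (μ ⊗ₘ κ) := hCs.2.congr hL_ae
  have hFs_int : Integrable Fs (μZ ⊗ₘ κs) := hCz.2.congr hLs_ae
  have hFs_meas : Measurable Fs := by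
    refine Measurable.sub ?_ ?_
    · exact (Real.measurable_log.comp ((aux_meas_eval κs).ennreal_toReal))
    · exact (Real.measurable_log.comp
        (((measurable_of_countable (fun y => ν {y})).comp measurable_snd).ennreal_toReal))
  have hH_int : Integrable (fun p : X × Y => Fs (f p.1, p.2)) (μ ⊗ₘ κ) := by
    have h1 : Integrable Fs ((μ ⊗ₘ κ).map (fun p : X × Y => (f p.1, p.2))) := by
      rw [hmap]; exact hFs_int
    have := (integrable_map_measure h1.aestronglyMeasurable hmf.aemeasurable).1 h1
    exact this
  have hH_eq : ∫ p, Fs (f p.1, p.2) ∂(μ ⊗ₘ κ) = ∫ q, Fs q ∂(μZ ⊗ₘ κs) := by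
    rw [← hmap, integral_map hmf.aemeasurable (by rw [hmap]; exact hFs_int.aestronglyMeasurable)]
  -- the "conditional KL" part
  set G : X × Y → ℝ := fun p =>
    log (κ p.1 {p.2}).toReal - log (κs (f p.1) {p.2}).toReal with hGdef
  have hGFH : G = fun p => F p - Fs (f p.1, p.2) := by
    funext p
    simp only [hGdef, hFdef, hFsdef]
    ring
  have hG_int : Integrable G (μ ⊗ₘ κ) := by
    rw [hGFH]
    exact hF_int.sub hH_int
  have hG_zero : ∫ p, G p ∂(μ ⊗ₘ κ) = 0 := by
    rw [hGFH, integral_sub hF_int hH_int, hH_eq, ← integral_congr_ae hL_ae,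
      ← integral_congr_ae hLs_ae, hIeq, sub_self]
  -- inner integral: expected conditional KL
  set D : X → ℝ := fun x =>
    ∑ y : Y, (κ x {y}).toReal * (log (κ x {y}).toReal - log (κs (f x) {y}).toReal) with hDdef
  have hD_inner : ∀ x : X, ∫ y, G (x, y) ∂(κ x) = D x := by
    intro x
    rw [integral_fintype Integrable.of_finite]
    simp [hDdef, hGdef, smul_eq_mul, measureReal_def]
  have hD_meas : Measurable D := by
    refine Finset.measurable_sum _ fun y _ => Measurable.mul ?_ (Measurable.sub ?_ ?_)
    · exact (Kernel.measurable_coe κ (measurableSet_singleton y)).ennreal_toReal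
    · exact Real.measurable_log.comp
        (Kernel.measurable_coe κ (measurableSet_singleton y)).ennreal_toReal
    · exact Real.measurable_log.comp
        (((Kernel.measurable_coe κs (measurableSet_singleton y)).comp hf).ennreal_toReal)
  have hD_zero : ∫ x, D x ∂μ = 0 := by
    calc ∫ x, D x ∂μ = ∫ x, ∫ y, G (x, y) ∂(κ x) ∂μ :=
          integral_congr_ae (ae_of_all _ fun x => (hD_inner x).symm)
      _ = ∫ p, G p ∂(μ ⊗ₘ κ) := (Measure.integral_compProd hG_int).symm
      _ = 0 := hG_zero
  have hD_int : Integrable D μ := by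
    have hnorm := (Measure.integrable_compProd_iff hG_int.aestronglyMeasurable).1 hG_int
    refine hnorm.2.mono hD_meas.aestronglyMeasurable (ae_of_all _ fun x => ?_)
    rw [← hD_inner x]
    calc ‖∫ y, G (x, y) ∂(κ x)‖ ≤ ∫ y, ‖G (x, y)‖ ∂(κ x) := norm_integral_le_integral_norm _
      _ ≤ ‖∫ y, ‖G (x, y)‖ ∂(κ x)‖ := by rw [Real.norm_eq_abs]; exact le_abs_self _
  -- support condition
  have hsuppb : ∀ᵐ x ∂μ, ∀ y : Y, κs (f x) {y} = 0 → κ x {y} = 0 := by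
    rw [ae_all_iff]
    intro y
    have hA : MeasurableSet {z : Z | κs z {y} = 0} :=
      Kernel.measurable_coe κs (measurableSet_singleton y) (measurableSet_singleton 0)
    have c1 : (μZ ⊗ₘ κs) ({z : Z | κs z {y} = 0} ×ˢ ({y} : Set Y)) = 0 := by
      rw [Measure.compProd_apply_prod hA (measurableSet_singleton y),
        setLIntegral_congr_fun hA (fun z hz => hz)]
      simp
    have c2 : (μ ⊗ₘ κ) ((f ⁻¹' {z : Z | κs z {y} = 0}) ×ˢ ({y} : Set Y)) = 0 := by
      have hpre : (fun p : X × Y => (f p.1, p.2)) ⁻¹' ({z : Z | κs z {y} = 0} ×ˢ ({y} : Set Y))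
          = (f ⁻¹' {z : Z | κs z {y} = 0}) ×ˢ ({y} : Set Y) := by
        ext ⟨x, c⟩
        simp only [Set.mem_preimage, Set.mem_prod, Set.mem_singleton_iff, Set.mem_setOf_eq]
      rw [← hpre, ← hs, ← Measure.map_apply hmf (hA.prod (measurableSet_singleton y)),
        ← hPZdef, hks, c1]
    rw [Measure.compProd_apply_prod (hf hA) (measurableSet_singleton y)] at c2
    have hc := (setLIntegral_eq_zero_iff (hf hA)
      (Kernel.measurable_coe κ (measurableSet_singleton y))).1 c2
    filter_upwards [hc] with x hx hxy
    exact hx hxy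
  -- D is a.e. nonnegative, hence a.e. zero
  have hDshift : ∀ x : X, D x = ∑ y : Y,
      ((κ x {y}).toReal * (log (κ x {y}).toReal - log (κs (f x) {y}).toReal)
        - ((κ x {y}).toReal - (κs (f x) {y}).toReal)) := by
    intro x
    rw [Finset.sum_sub_distrib, Finset.sum_sub_distrib, aux_sum_one (κ x),
      aux_sum_one (κs (f x)), sub_self, sub_zero]
  have hterm_nonneg : ∀ x : X, (∀ y : Y, κs (f x) {y} = 0 → κ x {y} = 0) → ∀ y : Y,
      0 ≤ (κ x {y}).toReal * (log (κ x {y}).toReal - log (κs (f x) {y}).toReal)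
        - ((κ x {y}).toReal - (κs (f x) {y}).toReal) := by
    intro x hx y
    have hb0 : (κs (f x) {y}).toReal = 0 → (κ x {y}).toReal = 0 := by
      intro h0
      have h0' : κs (f x) {y} = 0 :=
        (((κs (f x) {y}).toReal_eq_zero_iff).1 h0).resolve_right (measure_ne_top _ _)
      rw [hx y h0']
      simp
    have := (aux_gibbs (a := (κ x {y}).toReal) (b := (κs (f x) {y}).toReal)
      ENNReal.toReal_nonneg ENNReal.toReal_nonneg hb0).1
    linarith
  have hD_nonneg : ∀ᵐ x ∂μ, 0 ≤ D x := by
    filter_upwards [hsuppb] with x hx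
    rw [hDshift x]
    exact Finset.sum_nonneg fun y _ => hterm_nonneg x hx y
  have hD_ae0 : D =ᵐ[μ] 0 := (integral_eq_zero_iff_of_nonneg_ae hD_nonneg hD_int).1 hD_zero
  -- conclude κ x = κs (f x) a.e.
  have hκκs : ∀ᵐ x ∂μ, κ x = κs (f x) := by
    filter_upwards [hD_ae0, hsuppb] with x hDx hx
    have hsum0 : ∑ y : Y,
        ((κ x {y}).toReal * (log (κ x {y}).toReal - log (κs (f x) {y}).toReal)
          - ((κ x {y}).toReal - (κs (f x) {y}).toReal)) = 0 := by
      rw [← hDshift x]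
      exact hDx
    have hzero := (Finset.sum_eq_zero_iff_of_nonneg
      (fun y _ => hterm_nonneg x hx y)).1 hsum0
    refine Measure.ext_of_singleton fun y => ?_
    have htr : (κ x {y}).toReal = (κs (f x) {y}).toReal := by
      have h0 := hzero y (Finset.mem_univ y)
      have hb0 : (κs (f x) {y}).toReal = 0 → (κ x {y}).toReal = 0 := by
        intro hb
        have hb' : κs (f x) {y} = 0 :=
          (((κs (f x) {y}).toReal_eq_zero_iff).1 hb).resolve_right (measure_ne_top _ _)
        rw [hx y hb']
        simp
      refine (aux_gibbs (a := (κ x {y}).toReal) (b := (κs (f x) {y}).toReal)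
        ENNReal.toReal_nonneg ENNReal.toReal_nonneg hb0).2 ?_
      linarith
    exact (ENNReal.toReal_eq_toReal_iff' (measure_ne_top _ _) (measure_ne_top _ _)).1 htr
  -- transfer to the target domain
  have hμtμ : μt ≪ μ := hac.map measurable_fst
  have hκκst : ∀ᵐ x ∂μt, κ x = κs (f x) := hκκs.filter_mono hμtμ.ae_le
  -- covariate shift in representation space
  have hPZt : PZt = μZt ⊗ₘ κs := by
    refine aux_measure_ext fun A hA y => ?_
    have hpre : (fun p : X × Y => (f p.1, p.2)) ⁻¹' (A ×ˢ ({y} : Set Y))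
        = (f ⁻¹' A) ×ˢ ({y} : Set Y) := by
      ext ⟨x, c⟩
      simp only [Set.mem_preimage, Set.mem_prod, Set.mem_singleton_iff]
    rw [hPZtdef, Measure.map_apply hmf (hA.prod (measurableSet_singleton y)), hpre, ht,
      Measure.compProd_apply_prod (hf hA) (measurableSet_singleton y),
      Measure.compProd_apply_prod hA (measurableSet_singleton y), hμZtf,
      setLIntegral_map hA (Kernel.measurable_coe κs (measurableSet_singleton y)) hf]
    refine lintegral_congr_ae (ae_restrict_of_ae ?_)
    filter_upwards [hκκst] with x hx
    rw [hx]
  have hcomp : μZt ⊗ₘ κt = μZt ⊗ₘ κs := by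
    rw [← hkt]
    exact hPZt
  -- uniqueness of disintegration over a finite label space
  have huniq : ∀ᵐ z ∂μZt, κt z = κs z := by
    have h_each : ∀ y : Y, ∀ᵐ z ∂μZt, κt z {y} = κs z {y} := by
      intro y
      refine ae_eq_of_forall_setLIntegral_eq_of_sigmaFinite
        (Kernel.measurable_coe κt (measurableSet_singleton y))
        (Kernel.measurable_coe κs (measurableSet_singleton y)) fun A hA _ => ?_
      rw [← Measure.compProd_apply_prod hA (measurableSet_singleton y),
        ← Measure.compProd_apply_prod hA (measurableSet_singleton y), hcomp]
    filter_upwards [ae_all_iff.2 h_each] with z hz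
    exact Measure.ext_of_singleton hz
  refine ⟨?_, huniq⟩
  have hkl0 : (fun z => klDiv (κt z) (κs z)) =ᵐ[μZt] fun _ => 0 := by
    filter_upwards [huniq] with z hz
    rw [hz]
    exact aux_klDiv_self (κs z)
  rw [lintegral_congr_ae hkl0, lintegral_zero]
end

section
/- In the OSHeDA setting, the relabeled target error satisfies Er(P_t^u, f_t) ≥ λ·Er(P_s^u, f_s) + (1 − λ)·Er(P_{t,u}, f_t) − √2·λ·C·(D_JS(P_{t,k}(Z) ‖ P_s(Z)))^{1/2}. (An intermediate inequality in the proof of Theorem 1, bounding the target open-set error from below by the relabeled source error and the unknown-class target error, up to a representation-distance term.) -/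
open MeasureTheory ProbabilityTheory Real
open scoped ENNReal

open Real

noncomputable def hfun (x : ℝ) : ℝ := x * Real.log x - x + 1 - 3*(x-1)^2/(2*(x+2))
noncomputable def hfun' (x : ℝ) : ℝ := Real.log x - (3/2)*((x-1)*(x+5))/(x+2)^2
noncomputable def hfun'' (x : ℝ) : ℝ := 1/x - 27/(x+2)^3

lemma hasDeriv_hfun {x : ℝ} (hx : 0 < x) : HasDerivAt hfun (hfun' x) x := by
  have hx2 : x + 2 ≠ 0 := by nlinarith
  have h1 : HasDerivAt (fun x : ℝ => x * Real.log x) (Real.log x + 1) x := by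
    have := (hasDerivAt_id x).mul (Real.hasDerivAt_log hx.ne')
    refine this.congr_deriv ?_
    field_simp
    simp only [id]; ring
  have h2 : HasDerivAt (fun x : ℝ => 3*(x-1)^2) (6*(x-1)) x := by
    have : HasDerivAt (fun x : ℝ => x - 1) 1 x := (hasDerivAt_id x).sub_const 1
    have := (this.pow 2).const_mul (3:ℝ)
    refine this.congr_deriv ?_; ring
  have h3 : HasDerivAt (fun x : ℝ => 2*(x+2)) 2 x := by
    have : HasDerivAt (fun x : ℝ => x + 2) 1 x := (hasDerivAt_id x).add_const 2
    have := this.const_mul (2:ℝ)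
    refine this.congr_deriv ?_; ring
  have h4 := h2.div h3 (by nlinarith)
  have h5 := (h1.sub (hasDerivAt_id x)).add_const 1
  have := h5.sub h4
  refine this.congr_deriv ?_
  unfold hfun'
  field_simp
  ring

lemma hasDeriv_hfun' {x : ℝ} (hx : 0 < x) : HasDerivAt hfun' (hfun'' x) x := by
  have hx2 : x + 2 ≠ 0 := by nlinarith
  have h1 : HasDerivAt (fun x : ℝ => (3/2)*((x-1)*(x+5))) ((3/2)*(2*x+4)) x := by
    have := (((hasDerivAt_id x).sub_const 1).mul ((hasDerivAt_id x).add_const 5)).const_mul ((3:ℝ)/2)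
    refine this.congr_deriv ?_; simp [id_eq]; try ring
  have h2 : HasDerivAt (fun x : ℝ => (x+2)^2) (2*(x+2)) x := by
    have := ((hasDerivAt_id x).add_const 2).pow 2
    refine this.congr_deriv ?_; simp [id_eq]; try ring
  have h3 := h1.div h2 (pow_ne_zero 2 hx2)
  have := (Real.hasDerivAt_log hx.ne').sub h3
  refine this.congr_deriv ?_
  unfold hfun''
  field_simp
  ring


lemma hfun'_mono : MonotoneOn hfun' (Set.Ioi (0:ℝ)) := by
  apply monotoneOn_of_deriv_nonneg (convex_Ioi 0)
  · exact fun y hy => (hasDeriv_hfun' (Set.mem_Ioi.mp hy)).continuousAt.continuousWithinAt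
  · intro y hy
    rw [interior_Ioi] at hy
    exact (hasDeriv_hfun' (Set.mem_Ioi.mp hy)).differentiableAt.differentiableWithinAt
  · intro y hy
    rw [interior_Ioi] at hy
    rw [(hasDeriv_hfun' (Set.mem_Ioi.mp hy)).deriv]
    have hy0 : (0:ℝ) < y := hy
    rw [hfun'', div_sub_div _ _ hy0.ne' (by positivity), div_nonneg_iff]
    left
    exact ⟨by nlinarith [sq_nonneg (y-1), sq_nonneg (y+2)], by positivity⟩

lemma hfun'_one : hfun' 1 = 0 := by unfold hfun'; norm_num

lemma hfun'_nonneg {x : ℝ} (hx : 1 ≤ x) : 0 ≤ hfun' x := by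
  calc (0:ℝ) = hfun' 1 := hfun'_one.symm
    _ ≤ hfun' x := hfun'_mono (by norm_num) (by simp; linarith) hx

lemma hfun'_nonpos {x : ℝ} (hx0 : 0 < x) (hx : x ≤ 1) : hfun' x ≤ 0 := by
  calc hfun' x ≤ hfun' 1 := hfun'_mono hx0 (by norm_num) hx
    _ = 0 := hfun'_one

lemma hfun_one : hfun 1 = 0 := by unfold hfun; norm_num

lemma hfun_nonneg {x : ℝ} (hx : 0 < x) : 0 ≤ hfun x := by
  rcases le_or_gt x 1 with h | h
  · have hanti : AntitoneOn hfun (Set.Ioc (0:ℝ) 1) := by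
      apply antitoneOn_of_deriv_nonpos (convex_Ioc 0 1)
      · exact ContinuousOn.mono (fun y hy => (hasDeriv_hfun (Set.mem_Ioi.mp hy)).continuousAt.continuousWithinAt) (fun y hy => hy.1)
      · intro y hy
        rw [interior_Ioc] at hy
        exact (hasDeriv_hfun hy.1).differentiableAt.differentiableWithinAt
      · intro y hy
        rw [interior_Ioc] at hy
        rw [(hasDeriv_hfun hy.1).deriv]
        exact hfun'_nonpos hy.1 hy.2.le
    calc (0:ℝ) = hfun 1 := hfun_one.symm
      _ ≤ hfun x := hanti (Set.mem_Ioc.mpr ⟨hx, h⟩) (Set.mem_Ioc.mpr ⟨by norm_num, le_refl 1⟩) h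
  · have hmono : MonotoneOn hfun (Set.Ici (1:ℝ)) := by
      apply monotoneOn_of_deriv_nonneg (convex_Ici 1)
      · exact ContinuousOn.mono (fun y hy => (hasDeriv_hfun (Set.mem_Ioi.mp hy)).continuousAt.continuousWithinAt) (fun y hy => Set.mem_Ioi.mpr (lt_of_lt_of_le one_pos hy))
      · intro y hy
        rw [interior_Ici] at hy
        exact (hasDeriv_hfun (lt_trans one_pos hy)).differentiableAt.differentiableWithinAt
      · intro y hy
        rw [interior_Ici] at hy
        rw [(hasDeriv_hfun (lt_trans one_pos hy)).deriv]
        exact hfun'_nonneg hy.le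
    calc (0:ℝ) = hfun 1 := hfun_one.symm
      _ ≤ hfun x := hmono (Set.mem_Ici.mpr (le_refl 1)) (Set.mem_Ici.mpr h.le) h.le

lemma key_ineq {x : ℝ} (hx : 0 ≤ x) : 3*(x-1)^2/(2*(x+2)) ≤ x * Real.log x - x + 1 := by
  rcases eq_or_lt_of_le hx with h | h
  · rw [← h]; norm_num
  · have := hfun_nonneg h
    unfold hfun at this
    linarith

open MeasureTheory ProbabilityTheory Real
open scoped ENNReal NNReal


section PartB
variable {Ω : Type*} [MeasurableSpace Ω]

lemma integrable_of_bounded_ae {μ : Measure Ω} [IsFiniteMeasure μ] {f : Ω → ℝ}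
    (hm : AEStronglyMeasurable f μ) {c : ℝ} (h : ∀ᵐ x ∂μ, ‖f x‖ ≤ c) : Integrable f μ :=
  Integrable.mono' (integrable_const c) hm h

lemma llr_integrable (ν M : Measure Ω) [IsProbabilityMeasure ν] [IsProbabilityMeasure M]
    (hν : ν ≪ M) (hle : ∀ᵐ x ∂M, ν.rnDeriv M x ≤ 2) : Integrable (llr ν M) ν := by
  have hint : Integrable (fun x => (M.rnDeriv ν x).toReal) ν := by
    refine integrable_toReal_of_lintegral_ne_top (M.measurable_rnDeriv ν).aemeasurable ?_
    exact ne_top_of_le_ne_top (by simp) Measure.lintegral_rnDeriv_le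
  refine Integrable.mono' (hint.add (integrable_const (Real.log 2)))
    (stronglyMeasurable_llr _ _).aestronglyMeasurable ?_
  have hpos : ∀ᵐ x ∂ν, 0 < ν.rnDeriv M x := Measure.rnDeriv_pos hν
  have hlt : ∀ᵐ x ∂ν, ν.rnDeriv M x < ∞ := hν.ae_le (Measure.rnDeriv_lt_top ν M)
  have hinv : (ν.rnDeriv M)⁻¹ =ᵐ[ν] M.rnDeriv ν := Measure.inv_rnDeriv hν
  have hle2 : ∀ᵐ x ∂ν, ν.rnDeriv M x ≤ 2 := hν.ae_le hle
  filter_upwards [hpos, hlt, hinv, hle2] with x h0 ht hi hb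
  have htR : (0:ℝ) < (ν.rnDeriv M x).toReal := ENNReal.toReal_pos h0.ne' ht.ne
  have htR2 : (ν.rnDeriv M x).toReal ≤ 2 := by
    rw [show (2:ℝ) = ((2:ℝ≥0∞)).toReal by simp]
    exact ENNReal.toReal_mono (by simp) hb
  have hinvR : ((ν.rnDeriv M x).toReal)⁻¹ = (M.rnDeriv ν x).toReal := by
    rw [← hi, Pi.inv_apply, ENNReal.toReal_inv]
  have h2 : Real.log ((ν.rnDeriv M x).toReal)⁻¹ ≤ ((ν.rnDeriv M x).toReal)⁻¹ - 1 :=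
    Real.log_le_sub_one_of_pos (by positivity)
  rw [Real.log_inv] at h2
  have h3 : (0:ℝ) < ((ν.rnDeriv M x).toReal)⁻¹ := by positivity
  have h1 : Real.log ((ν.rnDeriv M x).toReal) ≤ Real.log 2 := by
    exact Real.log_le_log htR htR2
  have h5 : (0:ℝ) ≤ (M.rnDeriv ν x).toReal := ENNReal.toReal_nonneg
  rw [llr_def, Real.norm_eq_abs, abs_le]
  simp only [Pi.add_apply]
  rw [hinvR] at h2 h3
  have : (0:ℝ) ≤ Real.log 2 := Real.log_nonneg (by norm_num)
  exact ⟨by linarith, by linarith⟩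

lemma xlogx_abs_le {x : ℝ} (h0 : 0 ≤ x) (h2 : x ≤ 2) : |x * Real.log x| ≤ 2 := by
  rcases h0.eq_or_lt with h | h
  · simp [← h]
  rcases le_total x 1 with h1 | h1
  · have hlog : Real.log x ≤ 0 := Real.log_nonpos h0 h1
    have h3 : Real.log x⁻¹ ≤ x⁻¹ - 1 := Real.log_le_sub_one_of_pos (by positivity)
    rw [Real.log_inv] at h3
    have h4 : x * (-Real.log x) ≤ x * (x⁻¹ - 1) :=
      mul_le_mul_of_nonneg_left (by linarith) h0
    have h5 : x * (x⁻¹ - 1) = 1 - x := by field_simp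
    rw [abs_of_nonpos (mul_nonpos_of_nonneg_of_nonpos h0 hlog)]
    nlinarith
  · have hlog0 : 0 ≤ Real.log x := Real.log_nonneg h1
    have h3 : Real.log x ≤ x - 1 := Real.log_le_sub_one_of_pos h
    rw [abs_of_nonneg (mul_nonneg h0 hlog0)]
    nlinarith

lemma half_pinsker (ν M : Measure Ω) [IsProbabilityMeasure ν] [IsProbabilityMeasure M]
    (hν : ν ≪ M) (hle : ∀ᵐ x ∂M, ν.rnDeriv M x ≤ 2) :
    0 ≤ ∫ x, llr ν M x ∂ν ∧
    ∫ x, |(ν.rnDeriv M x).toReal - 1| ∂M ≤ Real.sqrt 2 * Real.sqrt (∫ x, llr ν M x ∂ν) := by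
  set r : Ω → ℝ := fun x => (ν.rnDeriv M x).toReal with hrdef
  have hrm : Measurable r := (Measure.measurable_rnDeriv ν M).ennreal_toReal
  have hr0 : ∀ x, 0 ≤ r x := fun _ => ENNReal.toReal_nonneg
  have hr2 : ∀ᵐ x ∂M, r x ≤ 2 := by
    filter_upwards [hle] with x hx
    rw [show (2:ℝ) = ((2:ℝ≥0∞)).toReal by simp]
    exact ENNReal.toReal_mono (by simp) hx
  have hint_r : Integrable r M := by
    refine integrable_of_bounded_ae hrm.aestronglyMeasurable (c := 2) ?_
    filter_upwards [hr2] with x hx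
    rw [Real.norm_eq_abs, abs_of_nonneg (hr0 x)]; exact hx
  have hmean : ∫ x, r x ∂M = 1 := by
    rw [hrdef]
    rw [Measure.integral_toReal_rnDeriv hν]
    simp
  have hKL : ∫ x, llr ν M x ∂ν = ∫ x, r x * Real.log (r x) ∂M := by
    rw [← integral_rnDeriv_smul hν (f := llr ν M)]
    congr 1
  set w : Ω → ℝ := fun x => (2 * r x + 4)/3 with hwdef
  have hwm : Measurable w := by
    apply Measurable.div_const
    exact (hrm.const_mul 2).add_const 4
  have hw_pos : ∀ x, 0 < w x := fun x => by
    have := hr0 x; simp only [hwdef]; positivity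
  have hw_ge : ∀ x, (1:ℝ) ≤ w x := fun x => by
    have := hr0 x; simp only [hwdef]; linarith
  have hiw : ∫ x, w x ∂M = 2 := by
    have hfe : w = fun x => (2/3 : ℝ) * r x + 4/3 := by
      funext x; simp only [hwdef]; ring
    rw [hfe, integral_add (hint_r.const_mul _) (integrable_const _), integral_const_mul,
      hmean, integral_const]
    simp
    norm_num
  have hint_rlogr : Integrable (fun x => r x * Real.log (r x)) M := by
    refine integrable_of_bounded_ae ?_ (c := 2) ?_
    · exact (hrm.mul (Real.measurable_log.comp hrm)).aestronglyMeasurable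
    · filter_upwards [hr2] with x hx
      rw [Real.norm_eq_abs]
      exact xlogx_abs_le (hr0 x) hx
  have hphi_eq : ∫ x, (r x * Real.log (r x) - r x + 1) ∂M = ∫ x, llr ν M x ∂ν := by
    have hsub : Integrable (fun x => r x * Real.log (r x) - r x) M := hint_rlogr.sub hint_r
    rw [integral_add hsub (integrable_const _),
      integral_sub hint_rlogr hint_r, hmean, integral_const, hKL]
    simp
  have hkey : ∀ x, (r x - 1)^2 / w x ≤ r x * Real.log (r x) - r x + 1 := by
    intro x
    have h1 : (r x - 1)^2 / w x = 3*(r x - 1)^2/(2*(r x + 2)) := by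
      have : r x + 2 > 0 := by linarith [hr0 x]
      rw [hwdef]
      beta_reduce
      rw [div_eq_div_iff (ne_of_gt (by linarith)) (ne_of_gt (by linarith))]
      ring
    rw [h1]
    exact key_ineq (hr0 x)
  have hsq_m : Measurable (fun x => (r x - 1)^2 / w x) :=
    ((hrm.sub measurable_const).pow_const 2).div hwm
  have hsq_int : Integrable (fun x => (r x - 1)^2 / w x) M := by
    refine integrable_of_bounded_ae hsq_m.aestronglyMeasurable (c := 1) ?_
    filter_upwards [hr2] with x hx
    rw [Real.norm_eq_abs, abs_of_nonneg (by positivity)]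
    rw [div_le_one (hw_pos x)]
    have := hr0 x
    nlinarith [hw_ge x]
  have hphi_int : Integrable (fun x => r x * Real.log (r x) - r x + 1) M := by
    have hsub : Integrable (fun x => r x * Real.log (r x) - r x) M := hint_rlogr.sub hint_r
    exact hsub.add (integrable_const 1)
  have hKLnonneg : 0 ≤ ∫ x, llr ν M x ∂ν := by
    rw [← hphi_eq]
    refine integral_nonneg fun x => ?_
    simp only [Pi.zero_apply]
    have := hkey x
    have h2 : 0 ≤ (r x - 1)^2 / w x := by positivity
    linarith
  have hsql : ∫ x, (r x - 1)^2 / w x ∂M ≤ ∫ x, llr ν M x ∂ν := by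
    rw [← hphi_eq]
    exact integral_mono hsq_int hphi_int hkey
  -- Cauchy-Schwarz
  set u : Ω → ℝ := fun x => |r x - 1| / Real.sqrt (w x) with hudef
  set v : Ω → ℝ := fun x => Real.sqrt (w x) with hvdef
  have hsqrtw_pos : ∀ x, 0 < Real.sqrt (w x) := fun x => Real.sqrt_pos.mpr (hw_pos x)
  have hsqrtw_ge1 : ∀ x, 1 ≤ Real.sqrt (w x) := fun x => by
    rw [show (1:ℝ) = Real.sqrt 1 by simp]
    exact Real.sqrt_le_sqrt (hw_ge x)
  have hum : Measurable u := (hrm.sub measurable_const).abs.div (hwm.sqrt)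
  have hvm : Measurable v := hwm.sqrt
  have hu0 : ∀ x, 0 ≤ u x := fun x => by positivity
  have hv0 : ∀ x, 0 ≤ v x := fun x => Real.sqrt_nonneg _
  have huv : ∀ x, u x * v x = |r x - 1| := fun x =>
    div_mul_cancel₀ _ (hsqrtw_pos x).ne'
  have hrpow2 : ∀ a : ℝ, 0 ≤ a → a ^ (2:ℝ) = a ^ (2:ℕ) := fun a ha => by
    rw [← Real.rpow_natCast a 2]; norm_num
  have hu2 : ∀ x, u x ^ (2:ℝ) = (r x - 1)^2 / w x := by
    intro x
    rw [hrpow2 _ (hu0 x), hudef]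
    simp only [div_pow, sq_abs]
    rw [Real.sq_sqrt (hw_pos x).le]
  have hv2 : ∀ x, v x ^ (2:ℝ) = w x := by
    intro x
    rw [hrpow2 _ (hv0 x), hvdef]
    exact Real.sq_sqrt (hw_pos x).le
  have hMemu : MemLp u (ENNReal.ofReal 2) M := by
    refine MemLp.of_bound hum.aestronglyMeasurable 1 ?_
    filter_upwards [hr2] with x hx
    rw [Real.norm_eq_abs, abs_of_nonneg (hu0 x), hudef]
    rw [div_le_one (hsqrtw_pos x)]
    have h1 : |r x - 1| ≤ 1 := by
      rw [abs_le]; constructor <;> [linarith [hr0 x]; linarith]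
    linarith [hsqrtw_ge1 x]
  have hMemv : MemLp v (ENNReal.ofReal 2) M := by
    refine MemLp.of_bound hvm.aestronglyMeasurable 2 ?_
    filter_upwards [hr2] with x hx
    rw [Real.norm_eq_abs, abs_of_nonneg (hv0 x), hvdef]
    rw [show (2:ℝ) = Real.sqrt 4 by
      rw [show (4:ℝ) = 2^2 by norm_num, Real.sqrt_sq (by norm_num : (0:ℝ) ≤ 2)]]
    apply Real.sqrt_le_sqrt
    rw [hwdef]
    linarith
  have hconj : Real.HolderConjugate 2 2 := Real.HolderConjugate.two_two
  have hH := integral_mul_le_Lp_mul_Lq_of_nonneg hconj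
    (Filter.Eventually.of_forall hu0) (Filter.Eventually.of_forall hv0) hMemu hMemv
  rw [show (fun a => u a * v a) = fun a => |r a - 1| by funext a; exact huv a] at hH
  refine ⟨hKLnonneg, ?_⟩
  have e1 : ∫ a, u a ^ (2:ℝ) ∂M = ∫ x, (r x - 1)^2 / w x ∂M :=
    integral_congr_ae (Filter.Eventually.of_forall fun x => hu2 x)
  have e2 : ∫ a, v a ^ (2:ℝ) ∂M = 2 := by
    rw [integral_congr_ae (Filter.Eventually.of_forall fun x => hv2 x), hiw]
  calc ∫ x, |r x - 1| ∂M
      ≤ (∫ a, u a ^ (2:ℝ) ∂M) ^ ((1:ℝ)/2) * (∫ a, v a ^ (2:ℝ) ∂M) ^ ((1:ℝ)/2) := hH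
    _ = Real.sqrt (∫ x, (r x - 1)^2 / w x ∂M) * Real.sqrt 2 := by
        rw [e1, e2, ← Real.sqrt_eq_rpow, ← Real.sqrt_eq_rpow]
    _ ≤ Real.sqrt (∫ x, llr ν M x ∂ν) * Real.sqrt 2 := by
        apply mul_le_mul_of_nonneg_right (Real.sqrt_le_sqrt hsql) (Real.sqrt_nonneg _)
    _ = Real.sqrt 2 * Real.sqrt (∫ x, llr ν M x ∂ν) := mul_comm _ _

lemma jsdiv_bound {Z : Type*} [MeasurableSpace Z] (P Q : Measure Z)
    [IsProbabilityMeasure P] [IsProbabilityMeasure Q]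
    (g : Z → ℝ) (hg : Measurable g) (C : ℝ) (hC : 0 ≤ C)
    (hg0 : ∀ z, 0 ≤ g z) (hgC : ∀ z, g z ≤ C) :
    ∫ z, g z ∂Q - ∫ z, g z ∂P ≤ Real.sqrt 2 * C * Real.sqrt ((jsDiv P Q).toReal) := by
  set M := midMeasure P Q with hMdef
  have hMprob : IsProbabilityMeasure M := by
    constructor
    simp only [hMdef, midMeasure, Measure.add_apply, Measure.smul_apply, smul_eq_mul,
      measure_univ, mul_one]
    exact ENNReal.inv_two_add_inv_two
  have hPM : P ≪ M := by
    refine Measure.AbsolutelyContinuous.mk fun s hs h0 => ?_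
    simp only [hMdef, midMeasure, Measure.add_apply, Measure.smul_apply, smul_eq_mul,
      add_eq_zero, mul_eq_zero, ENNReal.inv_eq_zero, ENNReal.ofNat_ne_top, false_or] at h0
    exact h0.1
  have hQM : Q ≪ M := by
    refine Measure.AbsolutelyContinuous.mk fun s hs h0 => ?_
    simp only [hMdef, midMeasure, Measure.add_apply, Measure.smul_apply, smul_eq_mul,
      add_eq_zero, mul_eq_zero, ENNReal.inv_eq_zero, ENNReal.ofNat_ne_top, false_or] at h0
    exact h0.2
  have hPQ : P + Q = (2:ℝ≥0) • M := by
    ext s hs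
    simp only [hMdef, midMeasure, Measure.add_apply, Measure.smul_apply, smul_eq_mul]
    rw [ENNReal.smul_def, smul_eq_mul, show ((2:ℝ≥0):ℝ≥0∞) = 2 by norm_num, mul_add,
      ← mul_assoc, ← mul_assoc,
      ENNReal.mul_inv_cancel (by norm_num) (by norm_num), one_mul, one_mul]
  have hsum : ∀ᵐ x ∂M, P.rnDeriv M x + Q.rnDeriv M x = 2 := by
    have h1 := Measure.rnDeriv_add P Q M
    rw [hPQ] at h1
    have h2 := Measure.rnDeriv_smul_left M M (2:ℝ≥0)
    have h3 := Measure.rnDeriv_self M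
    filter_upwards [h1, h2, h3] with x hx hy hz
    have : ((2:ℝ≥0) • M).rnDeriv M x = 2 := by
      rw [hy]
      simp only [Pi.smul_apply, hz, ENNReal.smul_def, smul_eq_mul]
      norm_num
    rw [← Pi.add_apply (P.rnDeriv M) (Q.rnDeriv M), ← hx, this]
  have hltP : ∀ᵐ x ∂M, P.rnDeriv M x < ∞ := Measure.rnDeriv_lt_top P M
  have hltQ : ∀ᵐ x ∂M, Q.rnDeriv M x < ∞ := Measure.rnDeriv_lt_top Q M
  have hleP : ∀ᵐ x ∂M, P.rnDeriv M x ≤ 2 := by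
    filter_upwards [hsum] with x hx
    calc P.rnDeriv M x ≤ P.rnDeriv M x + Q.rnDeriv M x := le_self_add
      _ = 2 := hx
  have hleQ : ∀ᵐ x ∂M, Q.rnDeriv M x ≤ 2 := by
    filter_upwards [hsum] with x hx
    calc Q.rnDeriv M x ≤ P.rnDeriv M x + Q.rnDeriv M x := le_add_self
      _ = 2 := hx
  have hsumR : ∀ᵐ x ∂M, (P.rnDeriv M x).toReal + (Q.rnDeriv M x).toReal = 2 := by
    filter_upwards [hsum, hltP, hltQ] with x hx hP hQ
    rw [← ENNReal.toReal_add hP.ne hQ.ne, hx]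
    norm_num
  have hhalfP := half_pinsker P M hPM hleP
  have hhalfQ := half_pinsker Q M hQM hleQ
  set KLP := ∫ x, llr P M x ∂P with hKLPdef
  set KLQ := ∫ x, llr Q M x ∂Q with hKLQdef
  set D := ∫ x, |(P.rnDeriv M x).toReal - 1| ∂M with hDdef
  have hDeq : ∫ x, |(Q.rnDeriv M x).toReal - 1| ∂M = D := by
    refine integral_congr_ae ?_
    filter_upwards [hsumR] with x hx
    rw [show (Q.rnDeriv M x).toReal - 1 = -((P.rnDeriv M x).toReal - 1) by linarith, abs_neg]
  have hD0 : 0 ≤ D := integral_nonneg fun x => abs_nonneg _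
  have hDP : D ≤ Real.sqrt 2 * Real.sqrt KLP := hhalfP.2
  have hDQ : D ≤ Real.sqrt 2 * Real.sqrt KLQ := hDeq ▸ hhalfQ.2
  have hKLP0 : 0 ≤ KLP := hhalfP.1
  have hKLQ0 : 0 ≤ KLQ := hhalfQ.1
  have hD2P : D^2 ≤ 2 * KLP := by
    calc D^2 ≤ (Real.sqrt 2 * Real.sqrt KLP)^2 := by
          apply pow_le_pow_left₀ hD0 hDP
      _ = 2 * KLP := by
          rw [mul_pow, Real.sq_sqrt (by norm_num : (0:ℝ) ≤ 2), Real.sq_sqrt hKLP0]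
  have hD2Q : D^2 ≤ 2 * KLQ := by
    calc D^2 ≤ (Real.sqrt 2 * Real.sqrt KLQ)^2 := by
          apply pow_le_pow_left₀ hD0 hDQ
      _ = 2 * KLQ := by
          rw [mul_pow, Real.sq_sqrt (by norm_num : (0:ℝ) ≤ 2), Real.sq_sqrt hKLQ0]
  have hDle : D ≤ Real.sqrt (KLP + KLQ) := by
    rw [← Real.sqrt_sq hD0]
    exact Real.sqrt_le_sqrt (by linarith)
  -- value of jsDiv
  have hintP : Integrable (llr P M) P := llr_integrable P M hPM hleP
  have hintQ : Integrable (llr Q M) Q := llr_integrable Q M hQM hleQ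
  have hklP : klDiv P M = ENNReal.ofReal KLP := by
    rw [klDiv, if_pos ⟨hPM, hintP⟩]
  have hklQ : klDiv Q M = ENNReal.ofReal KLQ := by
    rw [klDiv, if_pos ⟨hQM, hintQ⟩]
  have hjs : (jsDiv P Q).toReal = (KLP + KLQ)/2 := by
    rw [jsDiv, ← hMdef, hklP, hklQ,
      ENNReal.toReal_add (ENNReal.mul_ne_top (by norm_num) ENNReal.ofReal_ne_top)
        (ENNReal.mul_ne_top (by norm_num) ENNReal.ofReal_ne_top),
      ENNReal.toReal_mul, ENNReal.toReal_mul, ENNReal.toReal_ofReal hKLP0,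
      ENNReal.toReal_ofReal hKLQ0]
    norm_num
    ring
  have hsqrtjs : Real.sqrt (KLP + KLQ) = Real.sqrt 2 * Real.sqrt ((jsDiv P Q).toReal) := by
    rw [hjs, ← Real.sqrt_mul (by norm_num : (0:ℝ) ≤ 2)]
    ring_nf
  -- now the difference of integrals
  have hrmP : Measurable (fun x => (P.rnDeriv M x).toReal) :=
    (Measure.measurable_rnDeriv P M).ennreal_toReal
  have hrmQ : Measurable (fun x => (Q.rnDeriv M x).toReal) :=
    (Measure.measurable_rnDeriv Q M).ennreal_toReal
  have hr2P : ∀ᵐ x ∂M, (P.rnDeriv M x).toReal ≤ 2 := by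
    filter_upwards [hleP] with x hx
    rw [show (2:ℝ) = ((2:ℝ≥0∞)).toReal by simp]
    exact ENNReal.toReal_mono (by simp) hx
  have hr2Q : ∀ᵐ x ∂M, (Q.rnDeriv M x).toReal ≤ 2 := by
    filter_upwards [hleQ] with x hx
    rw [show (2:ℝ) = ((2:ℝ≥0∞)).toReal by simp]
    exact ENNReal.toReal_mono (by simp) hx
  have hintrP : Integrable (fun x => (P.rnDeriv M x).toReal) M := by
    refine integrable_of_bounded_ae hrmP.aestronglyMeasurable (c := 2) ?_
    filter_upwards [hr2P] with x hx
    rw [Real.norm_eq_abs, abs_of_nonneg ENNReal.toReal_nonneg]; exact hx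
  have hintrQ : Integrable (fun x => (Q.rnDeriv M x).toReal) M := by
    refine integrable_of_bounded_ae hrmQ.aestronglyMeasurable (c := 2) ?_
    filter_upwards [hr2Q] with x hx
    rw [Real.norm_eq_abs, abs_of_nonneg ENNReal.toReal_nonneg]; exact hx
  have hmeanP : ∫ x, (P.rnDeriv M x).toReal ∂M = 1 := by
    rw [Measure.integral_toReal_rnDeriv hPM]; simp
  have hmeanQ : ∫ x, (Q.rnDeriv M x).toReal ∂M = 1 := by
    rw [Measure.integral_toReal_rnDeriv hQM]; simp
  have hiP : ∫ z, g z ∂P = ∫ x, (P.rnDeriv M x).toReal * g x ∂M := by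
    rw [← integral_rnDeriv_smul hPM (f := g)]
    simp_rw [smul_eq_mul]
  have hiQ : ∫ z, g z ∂Q = ∫ x, (Q.rnDeriv M x).toReal * g x ∂M := by
    rw [← integral_rnDeriv_smul hQM (f := g)]
    simp_rw [smul_eq_mul]
  have hintPg : Integrable (fun x => (P.rnDeriv M x).toReal * g x) M := by
    refine integrable_of_bounded_ae (hrmP.mul hg).aestronglyMeasurable (c := 2*C) ?_
    filter_upwards [hr2P] with x hx
    rw [Real.norm_eq_abs, abs_mul, abs_of_nonneg ENNReal.toReal_nonneg,
      abs_of_nonneg (hg0 x)]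
    exact mul_le_mul hx (hgC x) (hg0 x) (by norm_num)
  have hintQg : Integrable (fun x => (Q.rnDeriv M x).toReal * g x) M := by
    refine integrable_of_bounded_ae (hrmQ.mul hg).aestronglyMeasurable (c := 2*C) ?_
    filter_upwards [hr2Q] with x hx
    rw [Real.norm_eq_abs, abs_mul, abs_of_nonneg ENNReal.toReal_nonneg,
      abs_of_nonneg (hg0 x)]
    exact mul_le_mul hx (hgC x) (hg0 x) (by norm_num)
  have hdiff : ∫ z, g z ∂Q - ∫ z, g z ∂P
      = ∫ x, ((Q.rnDeriv M x).toReal - (P.rnDeriv M x).toReal) * g x ∂M := by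
    rw [hiP, hiQ, ← integral_sub hintQg hintPg]
    congr 1
    funext x
    ring
  have hintdiffg : Integrable
      (fun x => ((Q.rnDeriv M x).toReal - (P.rnDeriv M x).toReal) * (g x - C/2)) M := by
    refine integrable_of_bounded_ae (((hrmQ.sub hrmP)).mul (hg.sub measurable_const)).aestronglyMeasurable
      (c := 2*C) ?_
    filter_upwards [hr2P, hr2Q] with x hxP hxQ
    rw [Real.norm_eq_abs, abs_mul]
    have h1 : |(Q.rnDeriv M x).toReal - (P.rnDeriv M x).toReal| ≤ 2 := by
      rw [abs_le]
      constructor <;> [linarith [ENNReal.toReal_nonneg (a := Q.rnDeriv M x)];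
        linarith [ENNReal.toReal_nonneg (a := P.rnDeriv M x)]]
    have h2 : |g x - C/2| ≤ C := by
      rw [abs_le]; constructor <;> [linarith [hg0 x]; linarith [hgC x]]
    exact mul_le_mul h1 h2 (abs_nonneg _) (by norm_num)
  have hintdiff : Integrable
      (fun x => ((Q.rnDeriv M x).toReal - (P.rnDeriv M x).toReal)) M := hintrQ.sub hintrP
  have hshift : ∫ x, ((Q.rnDeriv M x).toReal - (P.rnDeriv M x).toReal) * g x ∂M
      = ∫ x, ((Q.rnDeriv M x).toReal - (P.rnDeriv M x).toReal) * (g x - C/2) ∂M := by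
    have hzero : ∫ x, ((Q.rnDeriv M x).toReal - (P.rnDeriv M x).toReal) ∂M = 0 := by
      rw [integral_sub hintrQ hintrP, hmeanP, hmeanQ]
      ring
    have : (fun x => ((Q.rnDeriv M x).toReal - (P.rnDeriv M x).toReal) * g x)
        = fun x => ((Q.rnDeriv M x).toReal - (P.rnDeriv M x).toReal) * (g x - C/2)
          + (C/2) * ((Q.rnDeriv M x).toReal - (P.rnDeriv M x).toReal) := by
      funext x; ring
    rw [this, integral_add hintdiffg (hintdiff.const_mul _), integral_const_mul, hzero]
    ring
  have habs : Integrable (fun x => C * |(P.rnDeriv M x).toReal - 1|) M := by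
    refine integrable_of_bounded_ae ?_ (c := C) ?_
    · exact (((hrmP.sub measurable_const).abs).const_mul C).aestronglyMeasurable
    · filter_upwards [hr2P] with x hx
      rw [Real.norm_eq_abs, abs_mul, abs_of_nonneg hC, abs_abs]
      have : |(P.rnDeriv M x).toReal - 1| ≤ 1 := by
        rw [abs_le]
        constructor <;> [linarith [ENNReal.toReal_nonneg (a := P.rnDeriv M x)]; linarith]
      nlinarith
  have hbound : ∫ x, ((Q.rnDeriv M x).toReal - (P.rnDeriv M x).toReal) * (g x - C/2) ∂M
      ≤ ∫ x, C * |(P.rnDeriv M x).toReal - 1| ∂M := by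
    refine integral_mono_ae hintdiffg habs ?_
    filter_upwards [hsumR] with x hx
    have h2 : |g x - C/2| ≤ C/2 := by
      rw [abs_le]; constructor <;> [linarith [hg0 x]; linarith [hgC x]]
    have h1 : (Q.rnDeriv M x).toReal - (P.rnDeriv M x).toReal
        = 2 * (1 - (P.rnDeriv M x).toReal) := by linarith
    calc ((Q.rnDeriv M x).toReal - (P.rnDeriv M x).toReal) * (g x - C/2)
        ≤ |((Q.rnDeriv M x).toReal - (P.rnDeriv M x).toReal) * (g x - C/2)| := le_abs_self _
      _ = |(Q.rnDeriv M x).toReal - (P.rnDeriv M x).toReal| * |g x - C/2| := abs_mul _ _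
      _ ≤ |(Q.rnDeriv M x).toReal - (P.rnDeriv M x).toReal| * (C/2) :=
          mul_le_mul_of_nonneg_left h2 (abs_nonneg _)
      _ = 2 * |1 - (P.rnDeriv M x).toReal| * (C/2) := by
          rw [h1, abs_mul, abs_of_nonneg (by norm_num : (0:ℝ) ≤ 2)]
      _ = C * |(P.rnDeriv M x).toReal - 1| := by
          rw [abs_sub_comm]
          ring
  have hCd : ∫ x, C * |(P.rnDeriv M x).toReal - 1| ∂M = C * D := by
    rw [hDdef, integral_const_mul]
  calc ∫ z, g z ∂Q - ∫ z, g z ∂P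
      = ∫ x, ((Q.rnDeriv M x).toReal - (P.rnDeriv M x).toReal) * g x ∂M := hdiff
    _ = ∫ x, ((Q.rnDeriv M x).toReal - (P.rnDeriv M x).toReal) * (g x - C/2) ∂M := hshift
    _ ≤ ∫ x, C * |(P.rnDeriv M x).toReal - 1| ∂M := hbound
    _ = C * D := hCd
    _ ≤ C * (Real.sqrt 2 * Real.sqrt ((jsDiv P Q).toReal)) := by
        rw [← hsqrtjs]
        exact mul_le_mul_of_nonneg_left hDle hC
    _ = Real.sqrt 2 * C * Real.sqrt ((jsDiv P Q).toReal) := by ring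

end PartB

lemma integral_cond_smul {Ω : Type*} [MeasurableSpace Ω] (μ : Measure Ω) [IsFiniteMeasure μ]
    {s : Set Ω} (hs : MeasurableSet s) (f : Ω → ℝ) :
    (μ s).toReal * ∫ x, f x ∂(μ[|s]) = ∫ x in s, f x ∂μ := by
  rcases eq_or_ne (μ s) 0 with h | h
  · rw [h]
    simp only [ENNReal.toReal_zero, zero_mul]
    rw [← Measure.restrict_eq_zero] at h
    rw [h, integral_zero_measure]
  · rw [ProbabilityTheory.cond, integral_smul_measure, smul_eq_mul, ← mul_assoc,
      ENNReal.toReal_inv, mul_inv_cancel₀ (by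
        simp [ENNReal.toReal_eq_zero_iff, h, measure_ne_top μ s]), one_mul]

/-- Intermediate inequality in the proof of Theorem 1: the target open-set error is bounded
below by the relabeled source error and the unknown-class target error, up to a
representation-distance term. -/
theorem osheda_open_set_error_lower_bound
    {Xs Xt Z Y : Type*} [MeasurableSpace Xs] [MeasurableSpace Xt]
    [MeasurableSpace Z] [MeasurableSpace Y]
    (K : Set Y) (hK : MeasurableSet K) (unk : Y) (hunk : unk ∉ K)
    (Ps : Measure (Xs × Y)) (Pt : Measure (Xt × Y))
    [IsProbabilityMeasure Ps] [IsProbabilityMeasure Pt]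
    (fs : Xs → Z) (ft : Xt → Z) (hfs : Measurable fs) (hft : Measurable ft)
    (ℓ : Z × Y → ℝ) (hℓ : Measurable ℓ) (C : ℝ) (hC : 0 ≤ C)
    (hℓ0 : ∀ z y, 0 ≤ ℓ (z, y)) (hℓC : ∀ z y, ℓ (z, y) ≤ C)
    (lam : ℝ) (hlam : lam = (Pt {p | p.2 ∈ K}).toReal)
    (hlam0 : 0 < lam) (hlam1 : lam < 1)
    (hsrc : Ps {p | p.2 ∉ K} = 0)
    (htgt : Pt {p | p.2 ∉ K ∧ p.2 ≠ unk} = 0) :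
    ∫ p, ℓ (ft p.1, unk) ∂Pt ≥
      lam * ∫ p, ℓ (fs p.1, unk) ∂Ps
      + (1 - lam) * ∫ p, ℓ (ft p.1, p.2) ∂(Pt[|{p | p.2 ∉ K}])
      - Real.sqrt 2 * lam * C *
          Real.sqrt ((jsDiv ((Pt[|{p | p.2 ∈ K}]).map (fun p => ft p.1))
            (Ps.map (fun p => fs p.1))).toReal) := by
  classical
  set A : Set (Xt × Y) := {p | p.2 ∈ K} with hAdef
  have hA : MeasurableSet A := measurable_snd hK
  have hAc : {p : Xt × Y | p.2 ∉ K} = Aᶜ := rfl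
  have hPtA : (Pt A).toReal = lam := hlam.symm
  have hPtAne : Pt A ≠ 0 := by
    intro h
    rw [hlam, h] at hlam0
    simp at hlam0
  have hPtAc : (Pt Aᶜ).toReal = 1 - lam := by
    rw [measure_compl hA (measure_ne_top _ _), measure_univ,
      ENNReal.toReal_sub_of_le prob_le_one (by simp), ENNReal.toReal_one, hPtA]
  have hPtAcne : Pt Aᶜ ≠ 0 := by
    intro h
    rw [h] at hPtAc
    simp at hPtAc
    linarith
  have hcondA : IsProbabilityMeasure (Pt[|A]) := cond_isProbabilityMeasure hPtAne
  have hcondAc : IsProbabilityMeasure (Pt[|Aᶜ]) := cond_isProbabilityMeasure hPtAcne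
  -- measurability and integrability of the loss integrands
  have hFm : Measurable (fun p : Xt × Y => ℓ (ft p.1, unk)) :=
    hℓ.comp ((hft.comp measurable_fst).prodMk measurable_const)
  have hGm : Measurable (fun p : Xt × Y => ℓ (ft p.1, p.2)) :=
    hℓ.comp ((hft.comp measurable_fst).prodMk measurable_snd)
  have hFint : Integrable (fun p : Xt × Y => ℓ (ft p.1, unk)) Pt :=
    integrable_of_bounded_ae hFm.aestronglyMeasurable (c := C)
      (Filter.Eventually.of_forall fun p => by
        rw [Real.norm_eq_abs, abs_of_nonneg (hℓ0 _ _)]; exact hℓC _ _)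
  -- split the target integral
  have hsplit : ∫ p, ℓ (ft p.1, unk) ∂Pt
      = (∫ p in A, ℓ (ft p.1, unk) ∂Pt) + ∫ p in Aᶜ, ℓ (ft p.1, unk) ∂Pt :=
    (integral_add_compl hA hFint).symm
  -- the Aᶜ part
  have hae : ∀ᵐ p ∂Pt, ¬(p.2 ∉ K ∧ p.2 ≠ unk) := by
    refine ae_iff.mpr ?_
    convert htgt using 2
    simp only [not_not]
  have hcongr : ∫ p in Aᶜ, ℓ (ft p.1, unk) ∂Pt = ∫ p in Aᶜ, ℓ (ft p.1, p.2) ∂Pt := by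
    refine setIntegral_congr_ae hA.compl ?_
    filter_upwards [hae] with p hp hmem
    have hpk : p.2 ∉ K := hmem
    have : p.2 = unk := by
      by_contra hne
      exact hp ⟨hpk, hne⟩
    rw [this]
  have hAcpart : ∫ p in Aᶜ, ℓ (ft p.1, p.2) ∂Pt
      = (1 - lam) * ∫ p, ℓ (ft p.1, p.2) ∂(Pt[|Aᶜ]) := by
    rw [← integral_cond_smul Pt hA.compl _, hPtAc]
  -- the A part
  have hApart : ∫ p in A, ℓ (ft p.1, unk) ∂Pt
      = lam * ∫ p, ℓ (ft p.1, unk) ∂(Pt[|A]) := by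
    rw [← integral_cond_smul Pt hA _, hPtA]
  -- pass to representation space
  have hgZm : Measurable (fun z : Z => ℓ (z, unk)) := hℓ.comp measurable_prodMk_right
  have htA : ∫ p, ℓ (ft p.1, unk) ∂(Pt[|A])
      = ∫ z, ℓ (z, unk) ∂((Pt[|A]).map (fun p => ft p.1)) :=
    (integral_map (hft.comp measurable_fst).aemeasurable hgZm.aestronglyMeasurable).symm
  have hsS : ∫ p, ℓ (fs p.1, unk) ∂Ps
      = ∫ z, ℓ (z, unk) ∂(Ps.map (fun p => fs p.1)) :=
    (integral_map (hfs.comp measurable_fst).aemeasurable hgZm.aestronglyMeasurable).symm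
  have hmapA : IsProbabilityMeasure ((Pt[|A]).map (fun p => ft p.1)) :=
    Measure.isProbabilityMeasure_map (hft.comp measurable_fst).aemeasurable
  have hmapS : IsProbabilityMeasure (Ps.map (fun p => fs p.1)) :=
    Measure.isProbabilityMeasure_map (hfs.comp measurable_fst).aemeasurable
  have hJS := jsdiv_bound ((Pt[|A]).map (fun p => ft p.1)) (Ps.map (fun p => fs p.1))
    (fun z => ℓ (z, unk)) hgZm C hC (fun z => hℓ0 z unk) (fun z => hℓC z unk)
  rw [hAc]
  rw [hsplit, hcongr, hAcpart, hApart, htA, hsS]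
  have hmul := mul_le_mul_of_nonneg_left hJS hlam0.le
  set S := ∫ z, ℓ (z, unk) ∂(Ps.map (fun p => fs p.1))
  set T := ∫ z, ℓ (z, unk) ∂((Pt[|A]).map (fun p => ft p.1))
  set J := Real.sqrt ((jsDiv ((Pt[|A]).map (fun p => ft p.1))
    (Ps.map (fun p => fs p.1))).toReal)
  set U := ∫ p, ℓ (ft p.1, p.2) ∂(Pt[|Aᶜ])
  have : lam * (S - T) ≤ lam * (Real.sqrt 2 * C * J) := hmul
  nlinarith [this]
end
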